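/- arXiv:1912.03288 — 3 statements merged into one kernel-verified Lean document; each statement's English description precedes it below -/
import Mathlib

section
/- For any k ≥ 1, Λ(2^k) = 2^{k−1}·(k + 2). -/
/-- `U` induces a disjoint union of chains such that any two elements belonging to different
chains are incomparable; equivalently, comparability restricted to `U` is transitive
(so the comparability graph induced on `U` is a vertex-disjoint union of cliques). -/
def IsChainUnion {α : Type*} [PartialOrder α] (U : Finset α) : Prop :=
  ∀ x ∈ U, ∀ y ∈ U, ∀ z ∈ U,
    (x ≤ y ∨ y ≤ x) → (y ≤ z ∨ z ≤ y) → (x ≤ z ∨ z ≤ x)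

/-- `ao α`: the maximum cardinality of a subset of the finite poset `α` that is a
disjoint union of chains with elements of different chains incomparable. -/
noncomputable def ao (α : Type*) [Fintype α] [PartialOrder α] : ℕ :=
  sSup {m | ∃ U : Finset α, IsChainUnion U ∧ U.card = m}

/-- The height of a finite poset: the maximum size of a chain. -/
noncomputable def heightP (α : Type*) [Fintype α] [PartialOrder α] : ℕ :=
  sSup {m | ∃ C : Finset α, IsChain (· ≤ ·) (↑C : Set α) ∧ C.card = m}

/-- The width of a finite poset: the maximum size of an antichain. -/
noncomputable def widthP (α : Type*) [Fintype α] [PartialOrder α] : ℕ :=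
  sSup {m | ∃ A : Finset α, IsAntichain (· ≤ ·) (↑A : Set α) ∧ A.card = m}

/-- The cover graph of a poset: `x` and `y` are adjacent iff one covers the other. -/
def coverGraph (α : Type*) [PartialOrder α] : SimpleGraph α where
  Adj x y := x ⋖ y ∨ y ⋖ x
  symm := ⟨fun x y h => h.symm⟩
  loopless := ⟨fun x h => by rcases h with h | h <;> exact absurd h.lt (lt_irrefl x)⟩

/-- A poset is acyclic if its cover graph has no cycles. -/
def AcyclicPoset (α : Type*) [PartialOrder α] : Prop := (coverGraph α).IsAcyclic

/-- A poset is connected if its cover graph is connected. -/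
def ConnectedPoset (α : Type*) [PartialOrder α] : Prop := (coverGraph α).Connected

/-- A poset is `N`-free if there are no `p1, p2, p3, p4` with `p1 > p3`, `p1 > p4`, `p2 > p4`,
`p1 ∦ p2`, `p2 ∦ p3`, `p3 ∦ p4`. -/
def NFree (α : Type*) [PartialOrder α] : Prop :=
  ¬ ∃ p1 p2 p3 p4 : α, p3 < p1 ∧ p4 < p1 ∧ p4 < p2 ∧
      ¬(p1 ≤ p2 ∨ p2 ≤ p1) ∧ ¬(p2 ≤ p3 ∨ p3 ≤ p2) ∧ ¬(p3 ≤ p4 ∨ p4 ≤ p3)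

/-- A poset is `V`-free if there are no `p1 < p2`, `p1 < p3` with `p2` incomparable to `p3`. -/
def VFree (α : Type*) [PartialOrder α] : Prop :=
  ¬ ∃ p1 p2 p3 : α, p1 < p2 ∧ p1 < p3 ∧ ¬(p2 ≤ p3 ∨ p3 ≤ p2)

/-- `ao` of the family `T_n` of all acyclic posets on `n` elements:
the minimum of `ao P` over acyclic posets `P` of size `n`. -/
noncomputable def aoT (n : ℕ) : ℕ :=
  sInf {m | ∃ P : PartialOrder (Fin n),
    @AcyclicPoset (Fin n) P ∧ @ao (Fin n) (Fin.fintype n) P = m}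

/-- `Λ(a, h)`: the maximum cardinality of a `V`-free poset `P` with `ao P = a` and
height at most `h`. -/
noncomputable def Lam (a h : ℕ) : ℕ :=
  sSup {n | ∃ P : PartialOrder (Fin n), @VFree (Fin n) P ∧
    @ao (Fin n) (Fin.fintype n) P = a ∧ @heightP (Fin n) (Fin.fintype n) P ≤ h}

/-- `Λ(a) = Λ(a, a)`. -/
noncomputable def Lambda (a : ℕ) : ℕ := Lam a a

/-- `X(a)`: the maximum cardinality of an acyclic and `N`-free poset `P` with `ao P = a`. -/
noncomputable def Xmax (a : ℕ) : ℕ :=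
  sSup {n | ∃ P : PartialOrder (Fin n), @AcyclicPoset (Fin n) P ∧
    @NFree (Fin n) P ∧ @ao (Fin n) (Fin.fintype n) P = a}

section Aux

noncomputable def phiR (a : ℕ) : ℝ := (a : ℝ) * Real.logb 2 a / 2

lemma phiR_nonneg (a : ℕ) : 0 ≤ phiR a := by
  rcases Nat.eq_zero_or_pos a with h | h
  · simp [phiR, h]
  · have : (1:ℝ) ≤ a := by exact_mod_cast h
    have := Real.logb_nonneg (by norm_num : (1:ℝ) < 2) this
    unfold phiR
    positivity

lemma phiR_mono {m n : ℕ} (h : m ≤ n) : phiR m ≤ phiR n := by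
  rcases Nat.eq_zero_or_pos m with hm | hm
  · have := phiR_nonneg n
    simpa [phiR, hm] using this
  · have h1 : (1:ℝ) ≤ m := by exact_mod_cast hm
    have hmn : (m:ℝ) ≤ n := by exact_mod_cast h
    unfold phiR
    have hl := Real.logb_le_logb_of_le (by norm_num : (1:ℝ) < 2) (by linarith) hmn
    have := Real.logb_nonneg (by norm_num : (1:ℝ) < 2) h1
    have : (m:ℝ) * Real.logb 2 m ≤ (n:ℝ) * Real.logb 2 n :=
      mul_le_mul hmn hl this (by linarith)
    linarith

/-- key convexity fact: `t * log 2 ≤ log (1+t)` for `t ∈ [0,1]`. -/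
lemma log_one_add_ge (t : ℝ) (h0 : 0 ≤ t) (h1 : t ≤ 1) : t * Real.log 2 ≤ Real.log (1 + t) := by
  have hexp : Real.exp (t * Real.log 2) ≤ 1 + t := by
    have hc := convexOn_exp.2 (Set.mem_univ (0:ℝ)) (Set.mem_univ (Real.log 2))
      (by linarith : (0:ℝ) ≤ 1 - t) h0 (by ring)
    simp only [smul_eq_mul, mul_zero, zero_add, Real.exp_zero, mul_one,
      Real.exp_log (by norm_num : (0:ℝ) < 2)] at hc
    calc Real.exp (t * Real.log 2) ≤ (1 - t) * 1 + t * 2 := by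
          simpa [mul_comm] using hc
      _ = 1 + t := by ring
  calc t * Real.log 2 = Real.log (Real.exp (t * Real.log 2)) := (Real.log_exp _).symm
    _ ≤ Real.log (1 + t) := Real.log_le_log (Real.exp_pos _) hexp

lemma logb_one_add_ge (t : ℝ) (h0 : 0 ≤ t) (h1 : t ≤ 1) : t ≤ Real.logb 2 (1 + t) := by
  have h2 : (0:ℝ) < Real.log 2 := Real.log_pos (by norm_num)
  rw [Real.logb, le_div_iff₀ h2]
  exact log_one_add_ge t h0 h1

lemma phiR_superadd {x y : ℕ} (hx : 1 ≤ x) (hxy : x ≤ y) :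
    phiR x + phiR y + x ≤ phiR (x + y) := by
  have hX1 : (1:ℝ) ≤ (x:ℝ) := by exact_mod_cast hx
  have hX0 : (0:ℝ) < x := by linarith
  have hY0 : (0:ℝ) < y := by
    have : (x:ℝ) ≤ y := by exact_mod_cast hxy
    linarith
  have hXY : (x:ℝ) ≤ y := by exact_mod_cast hxy
  set X := (x:ℝ); set Y := (y:ℝ)
  -- piece 1 : X * logb X + X ≤ X * logb (X+Y)
  have p1 : X * Real.logb 2 X + X ≤ X * Real.logb 2 (X + Y) := by
    have h2X : Real.logb 2 (2 * X) ≤ Real.logb 2 (X + Y) :=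
      Real.logb_le_logb_of_le (by norm_num) (by linarith) (by linarith)
    have : Real.logb 2 (2 * X) = 1 + Real.logb 2 X := by
      rw [Real.logb_mul (by norm_num) (ne_of_gt hX0), Real.logb_self_eq_one] <;> norm_num
    nlinarith [h2X, this]
  -- piece 2 : Y * logb Y + X ≤ Y * logb (X+Y)
  have p2 : Y * Real.logb 2 Y + X ≤ Y * Real.logb 2 (X + Y) := by
    have ht0 : 0 ≤ X / Y := by positivity
    have ht1 : X / Y ≤ 1 := by rw [div_le_one hY0]; linarith
    have hlb := logb_one_add_ge (X / Y) ht0 ht1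
    have hXYeq : X + Y = Y * (1 + X / Y) := by field_simp; ring
    have : Real.logb 2 (X + Y) = Real.logb 2 Y + Real.logb 2 (1 + X / Y) := by
      rw [hXYeq, Real.logb_mul (ne_of_gt hY0) (by positivity)]
    rw [this]
    have : Y * (X / Y) = X := by field_simp
    nlinarith [hlb]
  unfold phiR
  push_cast
  linarith

lemma phiR_pow (k : ℕ) (hk : 1 ≤ k) : phiR (2 ^ k) = (k : ℝ) * 2 ^ (k - 1) := by
  unfold phiR
  have h1 : Real.logb 2 ((2:ℕ) ^ k : ℕ) = k := by
    push_cast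
    rw [Real.logb_pow, Real.logb_self_eq_one] <;> norm_num
  rw [h1]
  have h2 : ((2 ^ k : ℕ) : ℝ) = 2 * 2 ^ (k - 1) := by
    push_cast
    rw [← pow_succ']
    congr 1
    omega
  rw [h2]
  ring

section Machinery
variable {α : Type*} [Fintype α] [PartialOrder α]

noncomputable def aoF (S : Finset α) : ℕ :=
  sSup {m | ∃ U, U ⊆ S ∧ IsChainUnion U ∧ U.card = m}

noncomputable def htF (S : Finset α) : ℕ :=
  sSup {m | ∃ C, C ⊆ S ∧ IsChain (· ≤ ·) (↑C : Set α) ∧ C.card = m}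

lemma aoF_bdd (S : Finset α) : BddAbove {m | ∃ U, U ⊆ S ∧ IsChainUnion U ∧ U.card = m} :=
  ⟨S.card, fun m ⟨U, hU, _, hc⟩ => hc ▸ Finset.card_le_card hU⟩

lemma htF_bdd (S : Finset α) : BddAbove {m | ∃ C, C ⊆ S ∧ IsChain (· ≤ ·) (↑C : Set α) ∧ C.card = m} :=
  ⟨S.card, fun m ⟨U, hU, _, hc⟩ => hc ▸ Finset.card_le_card hU⟩

lemma aoF_ne (S : Finset α) : {m | ∃ U, U ⊆ S ∧ IsChainUnion U ∧ U.card = m}.Nonempty :=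
  ⟨0, ∅, Finset.empty_subset _, fun x hx => by simp at hx, rfl⟩

lemma htF_ne (S : Finset α) : {m | ∃ C, C ⊆ S ∧ IsChain (· ≤ ·) (↑C : Set α) ∧ C.card = m}.Nonempty :=
  ⟨0, ∅, Finset.empty_subset _, by simp [Set.Pairwise], rfl⟩

lemma le_aoF {S U : Finset α} (hU : U ⊆ S) (h : IsChainUnion U) : U.card ≤ aoF S :=
  le_csSup (aoF_bdd S) ⟨U, hU, h, rfl⟩

lemma le_htF {S C : Finset α} (hC : C ⊆ S) (h : IsChain (· ≤ ·) (↑C : Set α)) : C.card ≤ htF S :=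
  le_csSup (htF_bdd S) ⟨C, hC, h, rfl⟩

lemma aoF_spec (S : Finset α) : ∃ U, U ⊆ S ∧ IsChainUnion U ∧ U.card = aoF S :=
  Nat.sSup_mem (aoF_ne S) (aoF_bdd S)

lemma htF_spec (S : Finset α) : ∃ C, C ⊆ S ∧ IsChain (· ≤ ·) (↑C : Set α) ∧ C.card = htF S :=
  Nat.sSup_mem (htF_ne S) (htF_bdd S)

lemma aoF_mono {S T : Finset α} (h : S ⊆ T) : aoF S ≤ aoF T := by
  obtain ⟨U, hU, hcu, hc⟩ := aoF_spec S
  exact hc ▸ le_aoF (hU.trans h) hcu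

lemma htF_mono {S T : Finset α} (h : S ⊆ T) : htF S ≤ htF T := by
  obtain ⟨C, hC, hch, hc⟩ := htF_spec S
  exact hc ▸ le_htF (hC.trans h) hch

lemma chain_isChainUnion {C : Finset α} (h : IsChain (· ≤ ·) (↑C : Set α)) : IsChainUnion C := by
  intro x hx y hy z hz _ _
  rcases eq_or_ne x z with rfl | hne
  · exact Or.inl le_rfl
  · exact h (by exact_mod_cast hx) (by exact_mod_cast hz) hne

lemma htF_le_aoF (S : Finset α) : htF S ≤ aoF S := by
  obtain ⟨C, hC, hch, hc⟩ := htF_spec S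
  exact hc ▸ le_aoF hC (chain_isChainUnion hch)

lemma one_le_aoF {S : Finset α} (h : S.Nonempty) : 1 ≤ aoF S := by
  obtain ⟨x, hx⟩ := h
  have : ({x} : Finset α).card ≤ aoF S := by
    apply le_aoF (by simpa using hx)
    intro a ha b hb c hc _ _
    simp only [Finset.mem_singleton] at ha hc
    exact Or.inl (ha ▸ hc ▸ le_rfl)
  simpa using this

/-- additivity of `aoF` for a cross-incomparable partition -/
lemma aoF_add [DecidableEq α] {A B : Finset α} (hd : Disjoint A B)
    (hinc : ∀ x ∈ A, ∀ y ∈ B, ¬(x ≤ y ∨ y ≤ x)) :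
    aoF A + aoF B ≤ aoF (A ∪ B) := by
  obtain ⟨U, hU, hcu, hc⟩ := aoF_spec A
  obtain ⟨V, hV, hcv, hv⟩ := aoF_spec B
  have hdUV : Disjoint U V := hd.mono hU hV
  have hcard : (U ∪ V).card = aoF A + aoF B := by
    rw [Finset.card_union_of_disjoint hdUV, hc, hv]
  rw [← hcard]
  apply le_aoF (Finset.union_subset (hU.trans Finset.subset_union_left)
    (hV.trans (Finset.subset_union_right)))
  have hAB : ∀ u ∈ U, ∀ v ∈ V, ¬(u ≤ v ∨ v ≤ u) :=
    fun u hu v hv => hinc u (hU hu) v (hV hv)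
  intro x hx y hy z hz hxy hyz
  rcases Finset.mem_union.mp hx with hxU | hxV <;>
    rcases Finset.mem_union.mp hy with hyU | hyV <;>
      rcases Finset.mem_union.mp hz with hzU | hzV
  · exact hcu x hxU y hyU z hzU hxy hyz
  · exact absurd hyz (hAB y hyU z hzV)
  · exact absurd hxy (hAB x hxU y hyV)
  · exact absurd hxy (hAB x hxU y hyV)
  · exact absurd hxy fun h => hAB y hyU x hxV h.symm
  · exact absurd hxy fun h => hAB y hyU x hxV h.symm
  · exact absurd hyz fun h => hAB z hzU y hyV h.symm
  · exact hcv x hxV y hyV z hzV hxy hyz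

end Machinery

section MainBound
variable {α : Type*} [Fintype α] [PartialOrder α]

lemma vfree_comparable (hV : VFree α) {p q r : α} (h1 : p < q) (h2 : p < r) :
    q ≤ r ∨ r ≤ q := by
  by_contra h
  exact hV ⟨p, q, r, h1, h2, h⟩

theorem main_bound (hV : VFree α) :
    ∀ n (S : Finset α), S.card ≤ n → (S.card : ℝ) ≤ htF S + phiR (aoF S) := by
  classical
  intro n
  induction n with
  | zero =>
    intro S hS
    have : S.card = 0 := Nat.le_zero.mp hS
    rw [this]
    have := phiR_nonneg (aoF S)
    push_cast
    positivity
  | succ n ih =>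
    intro S hS
    rcases S.eq_empty_or_nonempty with rfl | hne
    · have h1 := phiR_nonneg (aoF (∅ : Finset α))
      have h2 : (0:ℝ) ≤ (htF (∅ : Finset α) : ℝ) := Nat.cast_nonneg _
      simp only [Finset.card_empty, Nat.cast_zero]
      linarith
    obtain ⟨r, hrS, hrmax⟩ := S.exists_maximal hne
    by_cases htop : ∀ x ∈ S, x ≤ r
    · -- unique top element: peel it
      set S' := S.erase r with hS'
      have hpos : 0 < S.card := Finset.card_pos.mpr hne
      have hcard : S.card = S'.card + 1 := by
        rw [hS', Finset.card_erase_of_mem hrS]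
        omega
      have hS'n : S'.card ≤ n := by omega
      have hIH := ih S' hS'n
      -- htF S' + 1 ≤ htF S
      have hht : htF S' + 1 ≤ htF S := by
        obtain ⟨C, hC, hch, hc⟩ := htF_spec S'
        have hrC : r ∉ C := fun h => (Finset.mem_erase.mp (hC h)).1 rfl
        have hins : IsChain (· ≤ ·) (↑(insert r C) : Set α) := by
          rw [Finset.coe_insert]
          apply hch.insert
          intro b hb _
          exact Or.inr (htop b (Finset.mem_of_mem_erase (hC hb)))
        have hsub : insert r C ⊆ S :=
          Finset.insert_subset hrS (hC.trans (Finset.erase_subset _ _))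
        have := le_htF hsub hins
        rw [Finset.card_insert_of_notMem hrC, hc] at this
        omega
      have hao : aoF S' ≤ aoF S := aoF_mono (Finset.erase_subset _ _)
      have := phiR_mono hao
      have h1 : ((htF S' : ℕ) : ℝ) + 1 ≤ (htF S : ℝ) := by exact_mod_cast hht
      rw [hcard]
      push_cast
      linarith
    · -- two incomparable "components"
      push_neg at htop
      obtain ⟨x, hxS, hxr⟩ := htop
      -- find a maximal element r' above x
      obtain ⟨r', hr'mem, hr'max⟩ := (S.filter (fun y => x ≤ y)).exists_maximal
        ⟨x, Finset.mem_filter.mpr ⟨hxS, le_rfl⟩⟩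
      rw [Finset.mem_filter] at hr'mem
      obtain ⟨hr'S, hxr'⟩ := hr'mem
      have hr'maxS : ∀ z ∈ S, ¬ r' < z := by
        intro z hz hlt
        exact (lt_iff_le_not_ge.mp hlt).2 (hr'max (Finset.mem_filter.mpr ⟨hz, hxr'.trans hlt.le⟩) hlt.le)
      set B := S.filter (fun y => y ≤ r') with hB
      set A := S \ B with hA
      have hrA : r ∈ A := by
        rw [hA, Finset.mem_sdiff, hB, Finset.mem_filter]
        refine ⟨hrS, fun h => ?_⟩
        have hrr' : r ≤ r' := h.2
        rcases eq_or_lt_of_le hrr' with rfl | hlt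
        · exact hxr hxr'
        · exact (lt_iff_le_not_ge.mp hlt).2 (hrmax hr'S hlt.le)
      have hr'B : r' ∈ B := Finset.mem_filter.mpr ⟨hr'S, le_rfl⟩
      -- cross incomparability
      have hinc : ∀ a ∈ A, ∀ b ∈ B, ¬(a ≤ b ∨ b ≤ a) := by
        intro a ha b hb hcomp
        rw [hA, Finset.mem_sdiff, hB, Finset.mem_filter] at ha
        rw [hB, Finset.mem_filter] at hb
        have har' : ¬ a ≤ r' := fun h => ha.2 ⟨ha.1, h⟩
        rcases hcomp with h | h
        · exact har' (h.trans hb.2)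
        · rcases eq_or_lt_of_le h with rfl | hba
          · exact har' hb.2
          · rcases eq_or_lt_of_le hb.2 with rfl | hbr'
            · exact hr'maxS a ha.1 hba
            · rcases vfree_comparable hV hba hbr' with h2 | h2
              · exact har' h2
              · rcases eq_or_lt_of_le h2 with rfl | h3
                · exact har' le_rfl
                · exact hr'maxS a ha.1 h3
      have hd : Disjoint A B := Finset.sdiff_disjoint
      have hUnion : A ∪ B = S := by
        rw [hA, Finset.sdiff_union_of_subset (Finset.filter_subset _ _)]
      have hcards : A.card + B.card = S.card := by
        rw [← Finset.card_union_of_disjoint hd, hUnion]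
      have hAn : A.card ≤ n := by
        have : 1 ≤ B.card := Finset.card_pos.mpr ⟨r', hr'B⟩
        omega
      have hBn : B.card ≤ n := by
        have : 1 ≤ A.card := Finset.card_pos.mpr ⟨r, hrA⟩
        omega
      have hIA := ih A hAn
      have hIB := ih B hBn
      have haA : 1 ≤ aoF A := one_le_aoF ⟨r, hrA⟩
      have haB : 1 ≤ aoF B := one_le_aoF ⟨r', hr'B⟩
      have hhtA : htF A ≤ htF S := htF_mono (hUnion ▸ Finset.subset_union_left)
      have hhtB : htF B ≤ htF S := htF_mono (hUnion ▸ Finset.subset_union_right)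
      have hhtAa : htF A ≤ aoF A := htF_le_aoF A
      have hhtBa : htF B ≤ aoF B := htF_le_aoF B
      have hadd : aoF A + aoF B ≤ aoF S := hUnion ▸ aoF_add hd hinc
      have hmono2 : phiR (aoF A + aoF B) ≤ phiR (aoF S) := phiR_mono hadd
      rw [← hcards]
      push_cast
      rcases le_total (aoF B) (aoF A) with hc | hc
      · have hsup := phiR_superadd haB hc
        rw [add_comm (aoF B) (aoF A)] at hsup
        have c1 : ((htF B : ℕ) : ℝ) ≤ (aoF B : ℝ) := by exact_mod_cast hhtBa
        have c2 : ((htF A : ℕ) : ℝ) ≤ (htF S : ℝ) := by exact_mod_cast hhtA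
        linarith only [hIA, hIB, hsup, c1, c2, hmono2]
      · have hsup := phiR_superadd haA hc
        have c1 : ((htF A : ℕ) : ℝ) ≤ (aoF A : ℝ) := by exact_mod_cast hhtAa
        have c2 : ((htF B : ℕ) : ℝ) ≤ (htF S : ℝ) := by exact_mod_cast hhtB
        linarith only [hIA, hIB, hsup, c1, c2, hmono2]

end MainBound

section Connect
variable {α : Type*} [Fintype α] [PartialOrder α]

lemma ao_eq_aoF : ao α = aoF (Finset.univ : Finset α) := by
  unfold ao aoF
  congr 1
  ext m
  constructor
  · rintro ⟨U, h1, h2⟩; exact ⟨U, Finset.subset_univ U, h1, h2⟩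
  · rintro ⟨U, _, h1, h2⟩; exact ⟨U, h1, h2⟩

lemma heightP_eq_htF : heightP α = htF (Finset.univ : Finset α) := by
  unfold heightP htF
  congr 1
  ext m
  constructor
  · rintro ⟨U, h1, h2⟩; exact ⟨U, Finset.subset_univ U, h1, h2⟩
  · rintro ⟨U, _, h1, h2⟩; exact ⟨U, h1, h2⟩

theorem card_le_of_vfree (hV : VFree α) :
    (Fintype.card α : ℝ) ≤ (heightP α : ℝ) + phiR (ao α) := by
  have := main_bound hV (Finset.univ : Finset α).card Finset.univ le_rfl
  rw [ao_eq_aoF, heightP_eq_htF]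
  rwa [Finset.card_univ] at this

end Connect


theorem upper_bound (k : ℕ) (hk : 1 ≤ k) (n : ℕ) (P : PartialOrder (Fin n))
    (hV : @VFree (Fin n) P) (hao : @ao (Fin n) (Fin.fintype n) P = 2 ^ k)
    (hht : @heightP (Fin n) (Fin.fintype n) P ≤ 2 ^ k) :
    n ≤ 2 ^ (k - 1) * (k + 2) := by
  have h1 := @card_le_of_vfree (Fin n) (Fin.fintype n) P hV
  rw [hao, phiR_pow k hk, Fintype.card_fin] at h1
  have h2 : ((@heightP (Fin n) (Fin.fintype n) P : ℕ) : ℝ) ≤ ((2:ℝ) ^ k) := by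
    exact_mod_cast Nat.cast_le.mpr hht
  have hsplit : (2:ℝ) ^ k = 2 ^ (k-1) * 2 := by
    rw [← pow_succ]
    congr 1
    omega
  have h3 : (n : ℝ) ≤ ((2 ^ (k - 1) * (k + 2) : ℕ) : ℝ) := by
    push_cast
    nlinarith [h1, h2]
  exact_mod_cast h3

lemma chain_isChainUnion' {α : Type*} [PartialOrder α] {C : Finset α}
    (h : IsChain (· ≤ ·) (↑C : Set α)) : IsChainUnion C := by
  intro x hx y hy z hz _ _
  rcases eq_or_ne x z with rfl | hne
  · exact Or.inl le_rfl
  · exact h (by exact_mod_cast hx) (by exact_mod_cast hz) hne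
section SumLemmas
variable {α β : Type*} [PartialOrder α] [PartialOrder β]

/-- splitting a finset of a lex sum -/
noncomputable def lexL (U : Finset (α ⊕ₗ β)) : Finset α :=
  (U.map (toLex (α := α ⊕ β)).symm.toEmbedding).toLeft

noncomputable def lexR (U : Finset (α ⊕ₗ β)) : Finset β :=
  (U.map (toLex (α := α ⊕ β)).symm.toEmbedding).toRight

lemma mem_lexL {U : Finset (α ⊕ₗ β)} {x : α} : x ∈ lexL U ↔ toLex (Sum.inl x) ∈ U := by
  simp [lexL, Finset.mem_map_equiv]

lemma mem_lexR {U : Finset (α ⊕ₗ β)} {x : β} : x ∈ lexR U ↔ toLex (Sum.inr x) ∈ U := by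
  simp [lexR, Finset.mem_map_equiv]

lemma card_lex (U : Finset (α ⊕ₗ β)) : (lexL U).card + (lexR U).card = U.card := by
  rw [lexL, lexR, Finset.card_toLeft_add_card_toRight, Finset.card_map]

lemma lex_cases (x : α ⊕ₗ β) : (∃ a, x = toLex (Sum.inl a)) ∨ (∃ b, x = toLex (Sum.inr b)) := by
  rcases h : ofLex x with a | b
  · exact Or.inl ⟨a, by rw [← h]; rfl⟩
  · exact Or.inr ⟨b, by rw [← h]; rfl⟩

lemma lex_inl_lt_inl_iff {a b : α} :
    toLex (Sum.inl a : α ⊕ β) < toLex (Sum.inl b) ↔ a < b := by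
  simp only [lt_iff_le_not_ge, Sum.Lex.inl_le_inl_iff]

lemma lex_inr_lt_inr_iff {a b : β} :
    toLex (Sum.inr a : α ⊕ β) < toLex (Sum.inr b) ↔ a < b := by
  simp only [lt_iff_le_not_ge, Sum.Lex.inr_le_inr_iff]

/-- V-freeness of a lex sum with a linear order on top -/
lemma vfree_lex (hα : VFree α) (hβ : ∀ c d : β, c ≤ d ∨ d ≤ c) : VFree (α ⊕ₗ β) := by
  rintro ⟨p1, p2, p3, h12, h13, hn⟩
  rcases lex_cases p2 with ⟨a2, rfl⟩ | ⟨b2, rfl⟩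
  · rcases lex_cases p3 with ⟨a3, rfl⟩ | ⟨b3, rfl⟩
    · -- both inl : use VFree α ; p1 must be inl
      rcases lex_cases p1 with ⟨a1, rfl⟩ | ⟨b1, rfl⟩
      · refine hα ⟨a1, a2, a3, lex_inl_lt_inl_iff.mp h12, lex_inl_lt_inl_iff.mp h13, ?_⟩
        intro h
        rcases h with h | h
        · exact hn (Or.inl (Sum.Lex.inl_le_inl_iff.mpr h))
        · exact hn (Or.inr (Sum.Lex.inl_le_inl_iff.mpr h))
      · exact Sum.Lex.not_inr_le_inl h12.le
    · exact hn (Or.inl (Sum.Lex.inl_le_inr _ _))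
  · rcases lex_cases p3 with ⟨a3, rfl⟩ | ⟨b3, rfl⟩
    · exact hn (Or.inr (Sum.Lex.inl_le_inr _ _))
    · rcases hβ b2 b3 with h | h
      · exact hn (Or.inl (Sum.Lex.inr_le_inr_iff.mpr h))
      · exact hn (Or.inr (Sum.Lex.inr_le_inr_iff.mpr h))

/-- V-freeness of a disjoint sum -/
lemma vfree_sum (hα : VFree α) (hβ : VFree β) : VFree (α ⊕ β) := by
  rintro ⟨p1, p2, p3, h12, h13, hn⟩
  rcases p1 with a1 | b1
  · rcases p2 with a2 | b2
    · rcases p3 with a3 | b3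
      · refine hα ⟨a1, a2, a3, ?_, ?_, ?_⟩
        · exact lt_of_le_of_ne (Sum.inl_le_inl_iff.mp h12.le) (fun h => h12.ne (by rw [h]))
        · exact lt_of_le_of_ne (Sum.inl_le_inl_iff.mp h13.le) (fun h => h13.ne (by rw [h]))
        · intro h
          rcases h with h | h
          · exact hn (Or.inl (Sum.inl_le_inl_iff.mpr h))
          · exact hn (Or.inr (Sum.inl_le_inl_iff.mpr h))
      · exact Sum.not_inl_le_inr h13.le
    · exact Sum.not_inl_le_inr h12.le
  · rcases p2 with a2 | b2
    · exact Sum.not_inr_le_inl h12.le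
    · rcases p3 with a3 | b3
      · exact Sum.not_inr_le_inl h13.le
      · refine hβ ⟨b1, b2, b3, ?_, ?_, ?_⟩
        · exact lt_of_le_of_ne (Sum.inr_le_inr_iff.mp h12.le) (fun h => h12.ne (by rw [h]))
        · exact lt_of_le_of_ne (Sum.inr_le_inr_iff.mp h13.le) (fun h => h13.ne (by rw [h]))
        · intro h
          rcases h with h | h
          · exact hn (Or.inl (Sum.inr_le_inr_iff.mpr h))
          · exact hn (Or.inr (Sum.inr_le_inr_iff.mpr h))

end SumLemmas

section SumCards
variable {α β : Type*} [PartialOrder α] [PartialOrder β]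

lemma chainUnion_toLeft {U : Finset (α ⊕ β)} (h : IsChainUnion U) : IsChainUnion U.toLeft := by
  intro x hx y hy z hz hxy hyz
  rw [Finset.mem_toLeft] at hx hy hz
  have := h _ hx _ hy _ hz
    (by rcases hxy with h' | h'; exacts [Or.inl (Sum.inl_le_inl_iff.mpr h'),
      Or.inr (Sum.inl_le_inl_iff.mpr h')])
    (by rcases hyz with h' | h'; exacts [Or.inl (Sum.inl_le_inl_iff.mpr h'),
      Or.inr (Sum.inl_le_inl_iff.mpr h')])
  rcases this with h' | h'
  · exact Or.inl (Sum.inl_le_inl_iff.mp h')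
  · exact Or.inr (Sum.inl_le_inl_iff.mp h')

lemma chainUnion_toRight {U : Finset (α ⊕ β)} (h : IsChainUnion U) : IsChainUnion U.toRight := by
  intro x hx y hy z hz hxy hyz
  rw [Finset.mem_toRight] at hx hy hz
  have := h _ hx _ hy _ hz
    (by rcases hxy with h' | h'; exacts [Or.inl (Sum.inr_le_inr_iff.mpr h'),
      Or.inr (Sum.inr_le_inr_iff.mpr h')])
    (by rcases hyz with h' | h'; exacts [Or.inl (Sum.inr_le_inr_iff.mpr h'),
      Or.inr (Sum.inr_le_inr_iff.mpr h')])
  rcases this with h' | h'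
  · exact Or.inl (Sum.inr_le_inr_iff.mp h')
  · exact Or.inr (Sum.inr_le_inr_iff.mp h')

lemma chainUnion_sum_card {a b : ℕ}
    (ha : ∀ U : Finset α, IsChainUnion U → U.card ≤ a)
    (hb : ∀ U : Finset β, IsChainUnion U → U.card ≤ b) :
    ∀ U : Finset (α ⊕ β), IsChainUnion U → U.card ≤ a + b := by
  intro U hU
  rw [← Finset.card_toLeft_add_card_toRight]
  exact Nat.add_le_add (ha _ (chainUnion_toLeft hU)) (hb _ (chainUnion_toRight hU))

lemma chain_sum_card {m : ℕ}
    (ha : ∀ C : Finset α, IsChain (· ≤ ·) (↑C : Set α) → C.card ≤ m)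
    (hb : ∀ C : Finset β, IsChain (· ≤ ·) (↑C : Set β) → C.card ≤ m) :
    ∀ C : Finset (α ⊕ β), IsChain (· ≤ ·) (↑C : Set (α ⊕ β)) → C.card ≤ m := by
  intro C hC
  rcases C.toLeft.eq_empty_or_nonempty with hL | ⟨x, hx⟩
  · have hcard : C.card = C.toRight.card := by
      rw [← Finset.card_toLeft_add_card_toRight, hL]; simp
    rw [hcard]
    apply hb
    intro u hu v hv huv
    rw [Finset.mem_coe, Finset.mem_toRight] at hu hv
    have := hC (by exact_mod_cast hu) (by exact_mod_cast hv)
      (fun h => huv (Sum.inr_injective h))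
    rcases this with h | h
    · exact Or.inl (Sum.inr_le_inr_iff.mp h)
    · exact Or.inr (Sum.inr_le_inr_iff.mp h)
  · rcases C.toRight.eq_empty_or_nonempty with hR | ⟨y, hy⟩
    · have hcard : C.card = C.toLeft.card := by
        rw [← Finset.card_toLeft_add_card_toRight, hR]; simp
      rw [hcard]
      apply ha
      intro u hu v hv huv
      rw [Finset.mem_coe, Finset.mem_toLeft] at hu hv
      have := hC (by exact_mod_cast hu) (by exact_mod_cast hv)
        (fun h => huv (Sum.inl_injective h))
      rcases this with h | h
      · exact Or.inl (Sum.inl_le_inl_iff.mp h)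
      · exact Or.inr (Sum.inl_le_inl_iff.mp h)
    · exfalso
      rw [Finset.mem_toLeft] at hx
      rw [Finset.mem_toRight] at hy
      have := hC (by exact_mod_cast hx) (by exact_mod_cast hy) (by simp)
      rcases this with h | h
      · exact Sum.not_inl_le_inr h
      · exact Sum.not_inr_le_inl h

lemma chain_lexL {C : Finset (α ⊕ₗ β)} (hC : IsChain (· ≤ ·) (↑C : Set (α ⊕ₗ β))) :
    IsChain (· ≤ ·) (↑(lexL C) : Set α) := by
  intro u hu v hv huv
  rw [Finset.mem_coe, mem_lexL] at hu hv
  have := hC (by exact_mod_cast hu) (by exact_mod_cast hv)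
    (fun h => huv (Sum.inl_injective (toLex.injective h)))
  rcases this with h | h
  · exact Or.inl (Sum.Lex.inl_le_inl_iff.mp h)
  · exact Or.inr (Sum.Lex.inl_le_inl_iff.mp h)

lemma chain_lex_card [Fintype β] {m : ℕ}
    (ha : ∀ C : Finset α, IsChain (· ≤ ·) (↑C : Set α) → C.card ≤ m) :
    ∀ C : Finset (α ⊕ₗ β), IsChain (· ≤ ·) (↑C : Set (α ⊕ₗ β)) →
      C.card ≤ m + Fintype.card β := by
  intro C hC
  rw [← card_lex C]
  exact Nat.add_le_add (ha _ (chain_lexL hC)) (Finset.card_le_univ _)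

lemma chainUnion_lexL {U : Finset (α ⊕ₗ β)} (h : IsChainUnion U) : IsChainUnion (lexL U) := by
  intro x hx y hy z hz hxy hyz
  rw [mem_lexL] at hx hy hz
  have := h _ hx _ hy _ hz
    (by rcases hxy with h' | h'; exacts [Or.inl (Sum.Lex.inl_le_inl_iff.mpr h'),
      Or.inr (Sum.Lex.inl_le_inl_iff.mpr h')])
    (by rcases hyz with h' | h'; exacts [Or.inl (Sum.Lex.inl_le_inl_iff.mpr h'),
      Or.inr (Sum.Lex.inl_le_inl_iff.mpr h')])
  rcases this with h' | h'
  · exact Or.inl (Sum.Lex.inl_le_inl_iff.mp h')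
  · exact Or.inr (Sum.Lex.inl_le_inl_iff.mp h')

lemma chainUnion_lex_card [Fintype β] {a h : ℕ}
    (hcu : ∀ U : Finset α, IsChainUnion U → U.card ≤ a)
    (hch : ∀ C : Finset α, IsChain (· ≤ ·) (↑C : Set α) → C.card ≤ h) :
    ∀ U : Finset (α ⊕ₗ β), IsChainUnion U → U.card ≤ max a (h + Fintype.card β) := by
  intro U hU
  rcases (lexR U).eq_empty_or_nonempty with hR | ⟨c, hc⟩
  · have hcard : U.card = (lexL U).card := by rw [← card_lex U, hR]; simp
    rw [hcard]
    exact le_max_of_le_left (hcu _ (chainUnion_lexL hU))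
  · -- top chain is inhabited ⇒ the bottom part of U is a chain
    rw [mem_lexR] at hc
    have hchain : IsChain (· ≤ ·) (↑(lexL U) : Set α) := by
      intro u hu v hv huv
      rw [Finset.mem_coe, mem_lexL] at hu hv
      have := hU _ hu _ hc _ hv (Or.inl (Sum.Lex.inl_le_inr _ _))
        (Or.inr (Sum.Lex.inl_le_inr _ _))
      rcases this with h' | h'
      · exact Or.inl (Sum.Lex.inl_le_inl_iff.mp h')
      · exact Or.inr (Sum.Lex.inl_le_inl_iff.mp h')
    apply le_max_of_le_right
    rw [← card_lex U]
    exact Nat.add_le_add (hch _ hchain) (Finset.card_le_univ _)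

/-- a maximum chain in a lex sum with a linear top -/
lemma chain_lex_exists [Fintype β] (hlin : ∀ c d : β, c ≤ d ∨ d ≤ c)
    {C : Finset α} (hC : IsChain (· ≤ ·) (↑C : Set α)) :
    ∃ D : Finset (α ⊕ₗ β), IsChain (· ≤ ·) (↑D : Set (α ⊕ₗ β)) ∧
      D.card = C.card + Fintype.card β := by
  classical
  let e1 : α ↪ (α ⊕ₗ β) := ⟨fun a => toLex (Sum.inl a), fun a b h =>
    Sum.inl_injective (toLex.injective h)⟩
  let e2 : β ↪ (α ⊕ₗ β) := ⟨fun b => toLex (Sum.inr b), fun a b h =>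
    Sum.inr_injective (toLex.injective h)⟩
  refine ⟨C.map e1 ∪ Finset.univ.map e2, ?_, ?_⟩
  · intro u hu v hv huv
    simp only [Finset.coe_union, Set.mem_union, Finset.mem_coe, Finset.mem_map,
      Finset.mem_univ, true_and] at hu hv
    rcases hu with ⟨a1, ha1, rfl⟩ | ⟨b1, _, rfl⟩ <;>
      rcases hv with ⟨a2, ha2, rfl⟩ | ⟨b2, _, rfl⟩
    · have := hC (by exact_mod_cast ha1) (by exact_mod_cast ha2)
        (fun h => huv (by simp [e1, h]))
      rcases this with h | h
      · exact Or.inl (Sum.Lex.inl_le_inl_iff.mpr h)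
      · exact Or.inr (Sum.Lex.inl_le_inl_iff.mpr h)
    · exact Or.inl (Sum.Lex.inl_le_inr _ _)
    · exact Or.inr (Sum.Lex.inl_le_inr _ _)
    · rcases hlin b1 b2 with h | h
      · exact Or.inl (Sum.Lex.inr_le_inr_iff.mpr h)
      · exact Or.inr (Sum.Lex.inr_le_inr_iff.mpr h)
  · rw [Finset.card_union_of_disjoint, Finset.card_map, Finset.card_map, Finset.card_univ]
    rw [Finset.disjoint_left]
    rintro x hx hx'
    simp only [Finset.mem_map, Finset.mem_univ, true_and] at hx hx'
    obtain ⟨a, _, rfl⟩ := hx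
    obtain ⟨b, hb⟩ := hx'
    exact Sum.inr_ne_inl (toLex.injective hb)

/-- chain in `α` gives chain in `α ⊕ β` -/
lemma chain_sum_exists_left {C : Finset α} (hC : IsChain (· ≤ ·) (↑C : Set α)) :
    ∃ D : Finset (α ⊕ β), IsChain (· ≤ ·) (↑D : Set (α ⊕ β)) ∧ D.card = C.card := by
  refine ⟨C.map ⟨Sum.inl, Sum.inl_injective⟩, ?_, Finset.card_map _⟩
  intro u hu v hv huv
  simp only [Finset.mem_coe, Finset.mem_map, Function.Embedding.coeFn_mk] at hu hv
  obtain ⟨a1, ha1, rfl⟩ := hu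
  obtain ⟨a2, ha2, rfl⟩ := hv
  have := hC (by exact_mod_cast ha1) (by exact_mod_cast ha2) (fun h => huv (by rw [h]))
  rcases this with h | h
  · exact Or.inl (Sum.inl_le_inl_iff.mpr h)
  · exact Or.inr (Sum.inl_le_inl_iff.mpr h)

end SumCards

def Tt : ℕ → Type
  | 0 => PUnit
  | (k+1) => (Tt k ⊕ Tt k) ⊕ₗ Fin (2^k)

instance TtPO : (k : ℕ) → PartialOrder (Tt k)
  | 0 => inferInstanceAs (PartialOrder PUnit)
  | (k+1) => letI := TtPO k
             inferInstanceAs (PartialOrder ((Tt k ⊕ Tt k) ⊕ₗ Fin (2^k)))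

instance TtFT : (k : ℕ) → Fintype (Tt k)
  | 0 => inferInstanceAs (Fintype PUnit)
  | (k+1) => letI := TtFT k
             letI := TtPO k
             inferInstanceAs (Fintype ((Tt k ⊕ Tt k) ⊕ₗ Fin (2^k)))

theorem Tt_inv : ∀ k : ℕ,
    VFree (Tt k) ∧
    (∀ C : Finset (Tt k), IsChain (· ≤ ·) (↑C : Set (Tt k)) → C.card ≤ 2^k) ∧
    (∀ U : Finset (Tt k), IsChainUnion U → U.card ≤ 2^k) ∧
    (∃ C : Finset (Tt k), IsChain (· ≤ ·) (↑C : Set (Tt k)) ∧ C.card = 2^k) ∧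
    2 * Fintype.card (Tt k) = 2^k * (k+2) := by
  intro k
  induction k with
  | zero =>
    refine ⟨?_, ?_, ?_, ?_, ?_⟩
    · rintro ⟨p1, p2, p3, _, _, hn⟩
      exact hn (Or.inl le_rfl)
    · intro C _
      simpa using (Finset.card_le_univ C).trans (by simp [Tt]; exact Fintype.card_le_one_iff.mpr (fun _ _ => rfl))
    · intro U _
      simpa using (Finset.card_le_univ U).trans (by simp [Tt]; exact Fintype.card_le_one_iff.mpr (fun _ _ => rfl))
    · refine ⟨{PUnit.unit}, ?_, Finset.card_singleton _⟩
      intro x hx y hy hxy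
      exact Or.inl le_rfl
    · show 2 * Fintype.card PUnit = 2 ^ 0 * (0 + 2)
      simp
  | succ k ih =>
    obtain ⟨hV, hH, hU, ⟨C0, hC0, hC0card⟩, hcard⟩ := ih
    have hlin : ∀ c d : Fin (2^k), c ≤ d ∨ d ≤ c := fun c d => le_total c d
    refine ⟨?_, ?_, ?_, ?_, ?_⟩
    · show VFree ((Tt k ⊕ Tt k) ⊕ₗ Fin (2^k))
      exact vfree_lex (vfree_sum hV hV) hlin
    · show ∀ C : Finset ((Tt k ⊕ Tt k) ⊕ₗ Fin (2^k)), _ → C.card ≤ 2^(k+1)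
      intro C hC
      have := chain_lex_card (chain_sum_card hH hH) C hC
      rw [Fintype.card_fin] at this
      calc C.card ≤ 2^k + 2^k := this
        _ = 2^(k+1) := by ring
    · show ∀ U : Finset ((Tt k ⊕ Tt k) ⊕ₗ Fin (2^k)), IsChainUnion U → U.card ≤ 2^(k+1)
      intro U hUcu
      have := chainUnion_lex_card (chainUnion_sum_card hU hU) (chain_sum_card hH hH) U hUcu
      rw [Fintype.card_fin] at this
      calc U.card ≤ max (2^k + 2^k) (2^k + 2^k) := this
        _ = 2^(k+1) := by rw [max_self]; ring
    · show ∃ C : Finset ((Tt k ⊕ Tt k) ⊕ₗ Fin (2^k)), _ ∧ C.card = 2^(k+1)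
      obtain ⟨D, hD, hDcard⟩ := chain_sum_exists_left (β := Tt k) hC0
      obtain ⟨E, hE, hEcard⟩ := chain_lex_exists (β := Fin (2^k)) hlin hD
      refine ⟨E, hE, ?_⟩
      rw [hEcard, hDcard, hC0card, Fintype.card_fin]
      ring
    · have h1 : Fintype.card (Tt (k+1)) = 2 * Fintype.card (Tt k) + 2^k := by
        have e : Tt (k+1) ≃ ((Tt k ⊕ Tt k) ⊕ (Fin (2^k))) :=
          (toLex (α := (Tt k ⊕ Tt k) ⊕ Fin (2^k))).symm
        rw [Fintype.card_congr e, Fintype.card_sum, Fintype.card_sum, Fintype.card_fin]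
        ring
      rw [h1]
      calc 2 * (2 * Fintype.card (Tt k) + 2^k)
          = 2 * (2 * Fintype.card (Tt k)) + 2 * 2^k := by ring
        _ = 2 * (2^k * (k+2)) + 2 * 2^k := by rw [hcard]
        _ = 2^(k+1) * (k+1+2) := by ring
section Iso
variable {β γ : Type*} [Fintype β] [Fintype γ] [PartialOrder β] [PartialOrder γ]

theorem vfree_of_orderIso (f : β ≃ γ) (hm : ∀ x y, x ≤ y ↔ f x ≤ f y) (hV : VFree γ) :
    VFree β := by
  rintro ⟨p1, p2, p3, h12, h13, hn⟩
  have hlt : ∀ x y : β, x < y → f x < f y := by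
    intro x y hxy
    rw [lt_iff_le_not_ge] at hxy ⊢
    exact ⟨(hm _ _).mp hxy.1, fun hc => hxy.2 ((hm _ _).mpr hc)⟩
  refine hV ⟨f p1, f p2, f p3, hlt _ _ h12, hlt _ _ h13, ?_⟩
  rintro (hc | hc)
  · exact hn (Or.inl ((hm _ _).mpr hc))
  · exact hn (Or.inr ((hm _ _).mpr hc))

theorem chainUnion_map (f : β ≃ γ) (hm : ∀ x y, x ≤ y ↔ f x ≤ f y)
    {U : Finset β} (hU : IsChainUnion U) : IsChainUnion (U.map f.toEmbedding) := by
  intro x hx y hy z hz hxy hyz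
  rw [Finset.mem_map_equiv] at hx hy hz
  have h1 : f.symm x ≤ f.symm y ∨ f.symm y ≤ f.symm x := by
    rcases hxy with hc | hc
    · exact Or.inl ((hm _ _).mpr (by simpa using hc))
    · exact Or.inr ((hm _ _).mpr (by simpa using hc))
  have h2 : f.symm y ≤ f.symm z ∨ f.symm z ≤ f.symm y := by
    rcases hyz with hc | hc
    · exact Or.inl ((hm _ _).mpr (by simpa using hc))
    · exact Or.inr ((hm _ _).mpr (by simpa using hc))
  have h3 := hU _ hx _ hy _ hz h1 h2
  rcases h3 with hc | hc
  · exact Or.inl (by simpa using (hm _ _).mp hc)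
  · exact Or.inr (by simpa using (hm _ _).mp hc)

theorem chain_map (f : β ≃ γ) (hm : ∀ x y, x ≤ y ↔ f x ≤ f y)
    {C : Finset β} (hC : IsChain (· ≤ ·) (↑C : Set β)) :
    IsChain (· ≤ ·) (↑(C.map f.toEmbedding) : Set γ) := by
  intro x hx y hy hxy
  rw [Finset.mem_coe, Finset.mem_map_equiv] at hx hy
  have := hC hx hy (fun hh => hxy (by
    have : f (f.symm x) = f (f.symm y) := by rw [hh]
    simpa using this))
  rcases this with hc | hc
  · exact Or.inl (by simpa using (hm _ _).mp hc)
  · exact Or.inr (by simpa using (hm _ _).mp hc)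

theorem ao_eq_of_orderIso (f : β ≃ γ) (hm : ∀ x y, x ≤ y ↔ f x ≤ f y) : ao β = ao γ := by
  have hm' : ∀ x y : γ, x ≤ y ↔ f.symm x ≤ f.symm y := by
    intro x y
    rw [hm (f.symm x) (f.symm y)]
    simp
  unfold ao
  congr 1
  ext m
  constructor
  · rintro ⟨U, hU, rfl⟩
    exact ⟨U.map f.toEmbedding, chainUnion_map f hm hU, Finset.card_map _⟩
  · rintro ⟨U, hU, rfl⟩
    exact ⟨U.map f.symm.toEmbedding, chainUnion_map f.symm (fun x y => hm' x y) hU,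
      Finset.card_map _⟩

theorem heightP_eq_of_orderIso (f : β ≃ γ) (hm : ∀ x y, x ≤ y ↔ f x ≤ f y) :
    heightP β = heightP γ := by
  have hm' : ∀ x y : γ, x ≤ y ↔ f.symm x ≤ f.symm y := by
    intro x y
    rw [hm (f.symm x) (f.symm y)]
    simp
  unfold heightP
  congr 1
  ext m
  constructor
  · rintro ⟨C, hC, rfl⟩
    exact ⟨C.map f.toEmbedding, chain_map f hm hC, Finset.card_map _⟩
  · rintro ⟨C, hC, rfl⟩
    exact ⟨C.map f.symm.toEmbedding, chain_map f.symm (fun x y => hm' x y) hC, Finset.card_map _⟩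

theorem ao_eq_val {a : ℕ}
    (hbound : ∀ U : Finset β, IsChainUnion U → U.card ≤ a)
    (hex : ∃ C : Finset β, IsChain (· ≤ ·) (↑C : Set β) ∧ C.card = a) :
    ao β = a := by
  obtain ⟨C, hC, hCcard⟩ := hex
  apply le_antisymm
  · apply csSup_le
    · exact ⟨0, ∅, fun x hx => by simp at hx, rfl⟩
    · rintro m ⟨U, hU, rfl⟩
      exact hbound U hU
  · apply le_csSup
    · exact ⟨a, fun m ⟨U, hU, hc⟩ => hc ▸ hbound U hU⟩
    · exact ⟨C, chain_isChainUnion' hC, hCcard⟩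

theorem heightP_le_val {h : ℕ}
    (hhb : ∀ C : Finset β, IsChain (· ≤ ·) (↑C : Set β) → C.card ≤ h) :
    heightP β ≤ h := by
  apply csSup_le
  · exact ⟨0, ∅, by simp [Set.Pairwise], rfl⟩
  · rintro m ⟨C, hC, rfl⟩
    exact hhb C hC

end Iso

theorem transport {γ : Type*} [PartialOrder γ] [Fintype γ] {n a h : ℕ}
    (hcard : Fintype.card γ = n)
    (hV : VFree γ)
    (hbound : ∀ U : Finset γ, IsChainUnion U → U.card ≤ a)
    (hex : ∃ C : Finset γ, IsChain (· ≤ ·) (↑C : Set γ) ∧ C.card = a)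
    (hhb : ∀ C : Finset γ, IsChain (· ≤ ·) (↑C : Set γ) → C.card ≤ h) :
    ∃ P : PartialOrder (Fin n), @VFree _ P ∧ @ao (Fin n) (Fin.fintype n) P = a ∧
      @heightP (Fin n) (Fin.fintype n) P ≤ h := by
  have e : γ ≃ Fin n := Fintype.equivFinOfCardEq hcard
  refine ⟨PartialOrder.lift e.symm e.symm.injective, ?_, ?_, ?_⟩
  · exact @vfree_of_orderIso (Fin n) γ (Fin.fintype n) _
      (PartialOrder.lift e.symm e.symm.injective) _ e.symm (fun x y => Iff.rfl) hV
  · rw [@ao_eq_of_orderIso (Fin n) γ (Fin.fintype n) _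
      (PartialOrder.lift e.symm e.symm.injective) _ e.symm (fun x y => Iff.rfl)]
    exact ao_eq_val hbound hex
  · rw [@heightP_eq_of_orderIso (Fin n) γ (Fin.fintype n) _
      (PartialOrder.lift e.symm e.symm.injective) _ e.symm (fun x y => Iff.rfl)]
    exact heightP_le_val hhb

end Aux

/-- for `k ≥ 1`, `Λ(2^k) = 2^{k−1} · (k + 2)`. -/
theorem Lambda_pow_two (k : ℕ) (hk : 1 ≤ k) :
    Lambda (2 ^ k) = 2 ^ (k - 1) * (k + 2) := by
  classical
  set n0 := 2 ^ (k - 1) * (k + 2) with hn0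
  obtain ⟨hV, hH, hU, hex, hcard2⟩ := Tt_inv k
  have hp : 2 * 2 ^ (k - 1) = 2 ^ k := by
    rw [← pow_succ']
    congr 1
    omega
  have hcard : Fintype.card (Tt k) = n0 := by
    have h2 : 2 * Fintype.card (Tt k) = 2 * n0 := by
      rw [hcard2, hn0, ← mul_assoc, hp]
    omega
  obtain ⟨P, hPV, hPao, hPht⟩ := transport hcard hV hU hex hH
  have hmem : n0 ∈ {n | ∃ P : PartialOrder (Fin n), @VFree (Fin n) P ∧
      @ao (Fin n) (Fin.fintype n) P = 2 ^ k ∧ @heightP (Fin n) (Fin.fintype n) P ≤ 2 ^ k} :=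
    ⟨P, hPV, hPao, hPht⟩
  unfold Lambda Lam
  apply le_antisymm
  · apply csSup_le ⟨n0, hmem⟩
    rintro m ⟨Q, hQV, hQao, hQht⟩
    exact upper_bound k hk m Q hQV hQao hQht
  · apply le_csSup _ hmem
    refine ⟨n0, ?_⟩
    rintro m ⟨Q, hQV, hQao, hQht⟩
    exact upper_bound k hk m Q hQV hQao hQht
end

section
/- Let a = 2^k for some k ≥ 1. Then for any integer f with a/2 < f < a, we have Λ(f) + Λ(a−f) + (a−f) < Λ(a). -/
set_option linter.unusedSectionVars false

namespace LamAux

/-- binary digit sum -/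
def s2 : ℕ → ℕ
  | 0 => 0
  | (n+1) => s2 ((n+1)/2) + (n+1) % 2
decreasing_by exact Nat.div_lt_self (Nat.succ_pos n) one_lt_two

lemma s2_zero : s2 0 = 0 := by simp [s2]

lemma s2_div2 (n : ℕ) : s2 n = s2 (n/2) + n % 2 := by
  cases n with
  | zero => simp [s2]
  | succ n => rw [s2]

lemma s2_two_mul (n : ℕ) : s2 (2*n) = s2 n := by
  rw [s2_div2 (2*n)]; simp [Nat.mul_div_cancel_left, Nat.mul_mod_right]

lemma s2_two_mul_add_one (n : ℕ) : s2 (2*n+1) = s2 n + 1 := by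
  rw [s2_div2 (2*n+1)]
  have h1 : (2*n+1)/2 = n := by omega
  have h2 : (2*n+1) % 2 = 1 := by omega
  rw [h1, h2]

lemma s2_one : s2 1 = 1 := by
  have := s2_two_mul_add_one 0
  simpa [s2_zero] using this

/-- shift: `s2 (2^m + j) = 1 + s2 j` for `j < 2^m` -/
lemma s2_shift (m : ℕ) : ∀ j < 2^m, s2 (2^m + j) = 1 + s2 j := by
  induction m with
  | zero =>
    intro j hj
    interval_cases j
    simp [s2_one, s2_zero]
  | succ m ih =>
    intro j hj
    have h2m : 2^(m+1) = 2*2^m := by ring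
    have hj2 : j / 2 < 2^m := by omega
    have key : (2^(m+1) + j) = 2*(2^m + j/2) + j % 2 := by omega
    have hds := s2_div2 j
    rcases Nat.mod_two_eq_zero_or_one j with h | h
    · rw [key, h, Nat.add_zero, s2_two_mul, ih _ hj2]
      omega
    · rw [key, h, s2_two_mul_add_one, ih _ hj2]
      omega

/-- sum of binary digit sums below n -/
def SB (n : ℕ) : ℕ := ∑ j ∈ Finset.range n, s2 j

lemma SB_zero : SB 0 = 0 := rfl

lemma SB_one : SB 1 = 0 := by simp [SB, s2_zero]

lemma SB_mono : Monotone SB := by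
  intro a b hab
  exact Finset.sum_le_sum_of_subset (Finset.range_subset_range.2 hab)

lemma SB_succ (n : ℕ) : SB (n+1) = SB n + s2 n := Finset.sum_range_succ _ _

lemma SB_shift (m : ℕ) : ∀ r ≤ 2^m, SB (2^m + r) = SB (2^m) + r + SB r := by
  intro r
  induction r with
  | zero => simp [SB_zero]
  | succ r ih =>
    intro hr
    have hr' : r < 2^m := by omega
    rw [show 2^m + (r+1) = (2^m + r) + 1 from rfl, SB_succ, ih (le_of_lt hr'),
      s2_shift m r hr', SB_succ]
    ring

/-- reflection: `s2 (2^m - 1 - j) + s2 j = m` for `j < 2^m` -/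
lemma s2_reflect (m : ℕ) : ∀ j < 2^m, s2 (2^m - 1 - j) + s2 j = m := by
  induction m with
  | zero => intro j hj; interval_cases j; simp [s2_zero]
  | succ m ih =>
    intro j hj
    have h2 : 2^(m+1) = 2*2^m := by ring
    rcases Nat.mod_two_eq_zero_or_one j with h | h
    · have hj2 : j/2 < 2^m := by omega
      have key : 2^(m+1) - 1 - j = 2*(2^m - 1 - j/2) + 1 := by omega
      rw [key, s2_two_mul_add_one, s2_div2 j, h]
      have := ih (j/2) hj2
      omega
    · have hj2 : j/2 < 2^m := by omega
      have key : 2^(m+1) - 1 - j = 2*(2^m - 1 - j/2) := by omega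
      rw [key, s2_two_mul, s2_div2 j, h]
      have := ih (j/2) hj2
      omega

/-- interval sum of digit sums -/
def ISum (a w : ℕ) : ℕ := ∑ i ∈ Finset.range w, s2 (a + i)

lemma SB_add_ISum (a w : ℕ) : SB a + ISum a w = SB (a + w) := by
  induction w with
  | zero => simp [ISum]
  | succ w ih =>
    rw [show a + (w+1) = (a+w)+1 from rfl, SB_succ, ← ih]
    unfold ISum
    rw [Finset.sum_range_succ]
    ring

lemma ISum_zero_left (w : ℕ) : ISum 0 w = SB w := by
  simp [ISum, SB]

/-- interval reflection -/
lemma ISum_reflect (m t w : ℕ) (h : t + w ≤ 2^m) :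
    ISum t w + ISum (2^m - t - w) w = w * m := by
  have key : ∀ i ∈ Finset.range w, s2 (2^m - t - w + i) = s2 (2^m - 1 - (t + (w - 1 - i))) := by
    intro i hi
    simp only [Finset.mem_range] at hi
    congr 1
    omega
  unfold ISum
  rw [Finset.sum_congr rfl key,
    Finset.sum_range_reflect (fun i => s2 (2^m - 1 - (t + i))) w,
    ← Finset.sum_add_distrib]
  have h2 : ∀ i ∈ Finset.range w, s2 (t+i) + s2 (2^m - 1 - (t+i)) = m := by
    intro i hi
    simp only [Finset.mem_range] at hi
    have := s2_reflect m (t+i) (by omega)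
    omega
  rw [Finset.sum_congr rfl h2]
  simp [Finset.sum_const, mul_comm]

lemma SB_superadd_aux : ∀ N x y, x + y ≤ N → x ≤ y → SB x + SB y + x ≤ SB (x + y) := by
  intro N
  induction N with
  | zero =>
    intro x y h hle
    have hx0 : x = 0 := by omega
    have hy0 : y = 0 := by omega
    subst hx0; subst hy0; simp [SB_zero]
  | succ N ihN =>
    intro x y hxy hle
    rcases Nat.eq_zero_or_pos x with rfl | hx
    · simp [SB_zero]
    have hy : 0 < y := lt_of_lt_of_le hx hle
    set m := Nat.log 2 y with hm
    have hp : 1 ≤ 2^m := Nat.one_le_two_pow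
    have h1 : 2^m ≤ y := Nat.pow_log_le_self 2 (by omega)
    have h2 : y < 2^(m+1) := Nat.lt_pow_succ_log_self (by norm_num) y
    have h2m : 2^(m+1) = 2*2^m := by ring
    set r := y - 2^m with hrdef
    have hr : r < 2^m := by omega
    have hSBy : SB y = SB (2^m) + r + SB r := by
      have := SB_shift m r (le_of_lt hr)
      rwa [show 2^m + r = y by omega] at this
    by_cases hA : x + y ≤ 2^(m+1)
    · -- Case A
      have hxr : x + r ≤ 2^m := by omega
      have hSBxy : SB (x+y) = SB (2^m) + (x+r) + SB (x+r) := by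
        have := SB_shift m (x+r) hxr
        rwa [show 2^m + (x+r) = x+y by omega] at this
      have hIH : SB x + SB r ≤ SB (x+r) := by
        rcases le_total x r with hc | hc
        · have := ihN x r (by omega) hc; omega
        · have := ihN r x (by omega) hc
          rw [show r + x = x + r by ring] at this; omega
      omega
    · by_cases hB1 : 2^m ≤ x
      · -- Case B1 : both in upper half
        set r' := x - 2^m with hr'def
        have hr' : r' < 2^m := by omega
        have hr'r : r' ≤ r := by omega
        have hSBx : SB x = SB (2^m) + r' + SB r' := by
          have := SB_shift m r' (le_of_lt hr')
          rwa [show 2^m + r' = x by omega] at this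
        have hSB2 : SB (2^(m+1)) = SB (2^m) + 2^m + SB (2^m) := by
          have := SB_shift m (2^m) le_rfl
          rwa [show 2^m + 2^m = 2^(m+1) by omega] at this
        have hSBxy : SB (x+y) = SB (2^(m+1)) + (r'+r) + SB (r'+r) := by
          have := SB_shift (m+1) (r'+r) (by omega)
          rwa [show 2^(m+1) + (r'+r) = x+y by omega] at this
        have hIH : SB r' + SB r + r' ≤ SB (r'+r) := ihN r' r (by omega) hr'r
        omega
      · -- Case B2 : x < 2^m < x + r
        push_neg at hB1
        set t := x + y - 2^(m+1) with htdef
        set w := 2^m - r with hwdef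
        have hw : 1 ≤ w := by omega
        have htw : t + w = x := by omega
        have htx : t < x := by omega
        have hSB2 : SB (2^(m+1)) = SB (2^m) + 2^m + SB (2^m) := by
          have := SB_shift m (2^m) le_rfl
          rwa [show 2^m + 2^m = 2^(m+1) by omega] at this
        have hSBxy : SB (x+y) = SB (2^(m+1)) + t + SB t := by
          have := SB_shift (m+1) t (by omega)
          rwa [show 2^(m+1) + t = x+y by omega] at this
        -- key: SB x + SB r ≤ SB (2^m) + SB t
        have hx_split : SB t + ISum t w = SB x := by
          have := SB_add_ISum t w; rwa [htw] at this
        have h2m_split : SB r + ISum r w = SB (2^m) := by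
          have := SB_add_ISum r w; rwa [show r + w = 2^m by omega] at this
        have hrefl1 : ISum t w + ISum (2^m - t - w) w = w * m :=
          ISum_reflect m t w (by omega)
        have hrefl2 : ISum r w + SB w = w * m := by
          have := ISum_reflect m r w (by omega)
          rwa [show 2^m - r - w = 0 by omega, ISum_zero_left] at this
        have hIH : SB (2^m - x) + SB w ≤ SB (2^m - t) := by
          rcases le_total (2^m - x) w with hc | hc
          · have := ihN (2^m - x) w (by omega) hc
            rw [show 2^m - x + w = 2^m - t by omega] at this; omega
          · have := ihN w (2^m - x) (by omega) hc
            rw [show w + (2^m - x) = 2^m - t by omega] at this; omega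
        have hIS : SB (2^m - x) + ISum (2^m - x) w = SB (2^m - t) := by
          have := SB_add_ISum (2^m - x) w
          rwa [show 2^m - x + w = 2^m - t by omega] at this
        rw [show (2^m - t - w) = 2^m - x by omega] at hrefl1
        omega

theorem SB_superadd (x y : ℕ) : SB x + SB y + min x y ≤ SB (x + y) := by
  rcases le_total x y with h | h
  · have := SB_superadd_aux (x+y) x y le_rfl h
    have hm : min x y = x := min_eq_left h
    omega
  · have h2 := SB_superadd_aux (y+x) y x le_rfl h
    rw [show y + x = x + y by ring] at h2
    have hm : min x y ≤ y := min_le_right x y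
    omega

theorem arith_main (k f : ℕ) (hk : 1 ≤ k) (h1 : 2^k < 2*f) (h2 : f < 2^k) :
    SB f + SB (2^k - f) + (2^k - f) < SB (2^k) := by
  obtain ⟨m, rfl⟩ : ∃ m, k = m + 1 := ⟨k-1, by omega⟩
  have h2m : 2^(m+1) = 2*2^m := by ring
  set g := f - 2^m with hgdef
  have hg1 : 1 ≤ g := by omega
  have hg2 : g < 2^m := by omega
  have hSBf : SB f = SB (2^m) + g + SB g := by
    have := SB_shift m g (le_of_lt hg2)
    rwa [show 2^m + g = f by omega] at this
  have hcompl : 2^(m+1) - f = 2^m - g := by omega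
  have hSB2 : SB (2^(m+1)) = SB (2^m) + 2^m + SB (2^m) := by
    have := SB_shift m (2^m) le_rfl
    rwa [show 2^m + 2^m = 2^(m+1) by omega] at this
  have hsup : SB g + SB (2^m - g) + min g (2^m - g) ≤ SB (2^m) := by
    have := SB_superadd g (2^m - g)
    rwa [show g + (2^m - g) = 2^m by omega] at this
  have hmin : 1 ≤ min g (2^m - g) := by
    rcases le_total g (2^m - g) with h | h
    · rw [min_eq_left h]; omega
    · rw [min_eq_right h]; omega
  rw [hcompl, hSBf, hSB2]
  omega


-- === poset part ===

variable {α : Type*} [Fintype α] [PartialOrder α]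
variable {β : Type*} [Fintype β] [PartialOrder β]

lemma isChainUnion_empty : IsChainUnion (∅ : Finset α) := by
  intro x hx; simp at hx

lemma chainUnion_bdd :
    BddAbove {m | ∃ U : Finset α, IsChainUnion U ∧ U.card = m} := by
  refine ⟨Fintype.card α, ?_⟩
  rintro m ⟨U, _, rfl⟩
  exact Finset.card_le_univ U

lemma chain_bdd :
    BddAbove {m | ∃ C : Finset α, IsChain (· ≤ ·) (↑C : Set α) ∧ C.card = m} := by
  refine ⟨Fintype.card α, ?_⟩
  rintro m ⟨C, _, rfl⟩
  exact Finset.card_le_univ C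

lemma ao_spec : ∃ U : Finset α, IsChainUnion U ∧ U.card = ao α := by
  have := Nat.sSup_mem (s := {m | ∃ U : Finset α, IsChainUnion U ∧ U.card = m})
    ⟨0, ∅, isChainUnion_empty, Finset.card_empty⟩ chainUnion_bdd
  exact this

lemma card_le_ao {U : Finset α} (h : IsChainUnion U) : U.card ≤ ao α :=
  le_csSup chainUnion_bdd ⟨U, h, rfl⟩

lemma height_spec : ∃ C : Finset α, IsChain (· ≤ ·) (↑C : Set α) ∧ C.card = heightP α := by
  have := Nat.sSup_mem (s := {m | ∃ C : Finset α, IsChain (· ≤ ·) (↑C : Set α) ∧ C.card = m})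
    ⟨0, ∅, by simp, Finset.card_empty⟩ chain_bdd
  exact this

lemma card_le_height {C : Finset α} (h : IsChain (· ≤ ·) (↑C : Set α)) :
    C.card ≤ heightP α :=
  le_csSup chain_bdd ⟨C, h, rfl⟩

lemma isChainUnion_of_isChain {C : Finset α} (h : IsChain (· ≤ ·) (↑C : Set α)) :
    IsChainUnion C := by
  intro x hx y hy z hz _ _
  rcases eq_or_ne x z with rfl | hne
  · exact Or.inl le_rfl
  · exact h (by simpa using hx) (by simpa using hz) hne

lemma height_le_ao : heightP α ≤ ao α := by
  obtain ⟨C, hC, hcard⟩ := height_spec (α := α)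
  rw [← hcard]
  exact card_le_ao (isChainUnion_of_isChain hC)

lemma one_le_ao [Nonempty α] : 1 ≤ ao α := by
  obtain ⟨a⟩ := ‹Nonempty α›
  have : IsChainUnion ({a} : Finset α) := by
    intro x hx y hy z hz _ _
    simp only [Finset.mem_singleton] at hx hz
    subst hx; subst hz
    exact Or.inl le_rfl
  simpa using card_le_ao this

lemma one_le_height [Nonempty α] : 1 ≤ heightP α := by
  obtain ⟨a⟩ := ‹Nonempty α›
  have : IsChain (· ≤ ·) (↑({a} : Finset α) : Set α) := by
    intro x hx y hy hne
    simp only [Finset.coe_singleton, Set.mem_singleton_iff] at hx hy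
    subst hx; subst hy; exact absurd rfl hne
  simpa using card_le_height this

lemma ao_le_card : ao α ≤ Fintype.card α := by
  obtain ⟨U, _, hcard⟩ := ao_spec (α := α)
  rw [← hcard]
  exact Finset.card_le_univ U

-- order embedding transfer
lemma isChainUnion_map (f : β ↪o α) {U : Finset β} (h : IsChainUnion U) :
    IsChainUnion (U.map f.toEmbedding) := by
  intro x hx y hy z hz hxy hyz
  obtain ⟨x', hx', rfl⟩ := Finset.mem_map.1 hx
  obtain ⟨y', hy', rfl⟩ := Finset.mem_map.1 hy
  obtain ⟨z', hz', rfl⟩ := Finset.mem_map.1 hz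
  simp only [RelEmbedding.coe_toEmbedding, f.le_iff_le] at hxy hyz ⊢
  exact h x' hx' y' hy' z' hz' hxy hyz

lemma isChain_map (f : β ↪o α) {C : Finset β} (h : IsChain (· ≤ ·) (↑C : Set β)) :
    IsChain (· ≤ ·) (↑(C.map f.toEmbedding) : Set α) := by
  intro x hx y hy hne
  simp only [Finset.coe_map, Set.mem_image, Finset.mem_coe,
    RelEmbedding.coe_toEmbedding] at hx hy
  obtain ⟨x', hx', rfl⟩ := hx
  obtain ⟨y', hy', rfl⟩ := hy
  have hne' : x' ≠ y' := fun h' => hne (by rw [h'])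
  rcases h hx' hy' hne' with h' | h'
  · exact Or.inl (f.monotone h')
  · exact Or.inr (f.monotone h')

lemma ao_le_embed (f : β ↪o α) : ao β ≤ ao α := by
  obtain ⟨U, hU, hcard⟩ := ao_spec (α := β)
  rw [← hcard, ← Finset.card_map f.toEmbedding]
  exact card_le_ao (isChainUnion_map f hU)

lemma height_le_embed (f : β ↪o α) : heightP β ≤ heightP α := by
  obtain ⟨C, hC, hcard⟩ := height_spec (α := β)
  rw [← hcard, ← Finset.card_map f.toEmbedding]
  exact card_le_height (isChain_map f hC)

lemma vfree_embed (f : β ↪o α) (h : VFree α) : VFree β := by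
  rintro ⟨p1, p2, p3, h12, h13, hinc⟩
  exact h ⟨f p1, f p2, f p3, f.strictMono h12, f.strictMono h13, by
    simp only [f.le_iff_le]; exact hinc⟩

lemma ao_congr (e : β ≃o α) : ao β = ao α :=
  le_antisymm (ao_le_embed e.toOrderEmbedding) (ao_le_embed e.symm.toOrderEmbedding)

lemma height_congr (e : β ≃o α) : heightP β = heightP α :=
  le_antisymm (height_le_embed e.toOrderEmbedding) (height_le_embed e.symm.toOrderEmbedding)

end LamAux

namespace LamAux

set_option maxHeartbeats 1000000 in
/-- Main upper bound: a V-free finite poset has size at most `SB (ao) + height`. -/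
theorem card_le_SB_aux : ∀ n : ℕ, ∀ (α : Type) [Fintype α] [PartialOrder α],
    Fintype.card α ≤ n → VFree α → Fintype.card α ≤ SB (ao α) + heightP α := by
  intro n
  induction n with
  | zero => intro α _ _ hc _; omega
  | succ n ih =>
    intro α _ _ hc hV
    classical
    rcases Nat.eq_zero_or_pos (Fintype.card α) with h0 | hpos
    · omega
    have hne : Nonempty α := Fintype.card_pos_iff.1 hpos
    obtain ⟨a⟩ := hne
    obtain ⟨m, hmax⟩ := Finset.exists_maximal (s := (Finset.univ : Finset α)) ⟨a, Finset.mem_univ a⟩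
    replace hmax : ∀ x : α, ¬ m < x := fun x hx => absurd (hmax.2 (Finset.mem_univ x) hx.le) hx.not_ge
    by_cases hall : ∀ x : α, x ≤ m
    · -- unique maximum case: peel off m
      have hcardβ : Fintype.card {x : α // x ≠ m} = Fintype.card α - 1 := by
        have h1 := Fintype.card_subtype_compl (· = m) (α := α)
        have h2 : Fintype.card {x : α // x = m} = 1 := Fintype.card_subtype_eq m
        rw [h2] at h1
        exact h1
      let embβ : {x : α // x ≠ m} ↪o α := OrderEmbedding.subtype _
      have hIH := ih {x : α // x ≠ m} (by omega) (vfree_embed embβ hV)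
      have haoβ : ao {x : α // x ≠ m} ≤ ao α := ao_le_embed embβ
      have hheight : heightP {x : α // x ≠ m} + 1 ≤ heightP α := by
        obtain ⟨C, hC, hcard⟩ := height_spec (α := {x : α // x ≠ m})
        have hmnotin : m ∉ C.map embβ.toEmbedding := by
          simp only [Finset.mem_map]
          rintro ⟨⟨x, hx⟩, -, h⟩
          exact hx h
        have hchain : IsChain (· ≤ ·) (↑(insert m (C.map embβ.toEmbedding)) : Set α) := by
          intro x hx y hy hne
          simp only [Finset.coe_insert, Set.mem_insert_iff, Finset.mem_coe] at hx hy
          rcases hx with rfl | hx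
          · rcases hy with rfl | hy
            · exact absurd rfl hne
            · exact Or.inr (hall y)
          · rcases hy with rfl | hy
            · exact Or.inl (hall x)
            · exact isChain_map embβ hC (by simpa using hx) (by simpa using hy) hne
        have := card_le_height hchain
        rw [Finset.card_insert_of_notMem hmnotin, Finset.card_map, hcard] at this
        omega
      have hSBm := SB_mono haoβ
      omega
    · -- split case
      push_neg at hall
      obtain ⟨y0, hy0⟩ := hall
      have key : ∀ x y : α, x ≤ m → ¬ y ≤ m → ¬ x ≤ y ∧ ¬ y ≤ x := by
        intro x y hx hy
        have hyx : ¬ y ≤ x := fun h => hy (h.trans hx)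
        refine ⟨?_, hyx⟩
        intro hxy
        have hxney : x ≠ y := fun h => hy (h ▸ hx)
        rcases eq_or_ne x m with rfl | hxm
        · exact hmax y (lt_of_le_of_ne hxy hxney)
        · apply hV
          refine ⟨x, m, y, lt_of_le_of_ne hx hxm, lt_of_le_of_ne hxy hxney, ?_⟩
          rintro (hmy | hym)
          · rcases eq_or_ne m y with rfl | hmy'
            · exact hy le_rfl
            · exact hmax y (lt_of_le_of_ne hmy hmy')
          · exact hy hym
      have hsum : Fintype.card {x : α // x ≤ m} + Fintype.card {x : α // ¬ x ≤ m}
          = Fintype.card α := by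
        have h1 := Fintype.card_subtype_compl (fun x : α => x ≤ m)
        have h2 : Fintype.card {x : α // x ≤ m} ≤ Fintype.card α :=
          Fintype.card_subtype_le _
        omega
      have hβpos : 0 < Fintype.card {x : α // x ≤ m} :=
        Fintype.card_pos_iff.2 ⟨⟨m, le_rfl⟩⟩
      have hγpos : 0 < Fintype.card {x : α // ¬ x ≤ m} :=
        Fintype.card_pos_iff.2 ⟨⟨y0, hy0⟩⟩
      let embβ : {x : α // x ≤ m} ↪o α := OrderEmbedding.subtype _
      let embγ : {x : α // ¬ x ≤ m} ↪o α := OrderEmbedding.subtype _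
      have hIHβ := ih {x : α // x ≤ m} (by omega) (vfree_embed embβ hV)
      have hIHγ := ih {x : α // ¬ x ≤ m} (by omega) (vfree_embed embγ hV)
      -- ao adds
      have haosum : ao {x : α // x ≤ m} + ao {x : α // ¬ x ≤ m} ≤ ao α := by
        obtain ⟨U1, hU1, hc1⟩ := ao_spec (α := {x : α // x ≤ m})
        obtain ⟨U2, hU2, hc2⟩ := ao_spec (α := {x : α // ¬ x ≤ m})
        set V1 := U1.map embβ.toEmbedding with hV1
        set V2 := U2.map embγ.toEmbedding with hV2
        have hmem1 : ∀ x ∈ V1, x ≤ m := by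
          rintro x hx
          obtain ⟨⟨x', hx'⟩, -, rfl⟩ := Finset.mem_map.1 hx
          exact hx'
        have hmem2 : ∀ x ∈ V2, ¬ x ≤ m := by
          rintro x hx
          obtain ⟨⟨x', hx'⟩, -, rfl⟩ := Finset.mem_map.1 hx
          exact hx'
        have hdisj : Disjoint V1 V2 := by
          rw [Finset.disjoint_left]
          intro x hx1 hx2
          exact hmem2 x hx2 (hmem1 x hx1)
        have hsame : ∀ x ∈ V1 ∪ V2, ∀ y ∈ V1 ∪ V2, (x ≤ y ∨ y ≤ x) →
            ((x ∈ V1 ∧ y ∈ V1) ∨ (x ∈ V2 ∧ y ∈ V2)) := by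
          intro x hx y hy hxy
          rcases Finset.mem_union.1 hx with hx1 | hx2 <;>
            rcases Finset.mem_union.1 hy with hy1 | hy2
          · exact Or.inl ⟨hx1, hy1⟩
          · rcases hxy with h | h
            · exact absurd h (key x y (hmem1 x hx1) (hmem2 y hy2)).1
            · exact absurd h (key x y (hmem1 x hx1) (hmem2 y hy2)).2
          · rcases hxy with h | h
            · exact absurd h (key y x (hmem1 y hy1) (hmem2 x hx2)).2
            · exact absurd h (key y x (hmem1 y hy1) (hmem2 x hx2)).1
          · exact Or.inr ⟨hx2, hy2⟩
        have hCU : IsChainUnion (V1 ∪ V2) := by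
          intro x hx y hy z hz hxy hyz
          rcases hsame x hx y hy hxy with ⟨hx1, hy1⟩ | ⟨hx2, hy2⟩
          · rcases hsame y hy z hz hyz with ⟨-, hz1⟩ | ⟨hy2', -⟩
            · obtain ⟨x', hx', rfl⟩ := Finset.mem_map.1 hx1
              obtain ⟨y', hy', rfl⟩ := Finset.mem_map.1 hy1
              obtain ⟨z', hz', rfl⟩ := Finset.mem_map.1 hz1
              simp only [RelEmbedding.coe_toEmbedding, embβ.le_iff_le] at hxy hyz ⊢
              exact hU1 x' hx' y' hy' z' hz' hxy hyz
            · exact absurd hy1 (Finset.disjoint_left.1 hdisj.symm hy2')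
          · rcases hsame y hy z hz hyz with ⟨hy1', -⟩ | ⟨-, hz2⟩
            · exact absurd hy1' (Finset.disjoint_left.1 hdisj.symm hy2)
            · obtain ⟨x', hx', rfl⟩ := Finset.mem_map.1 hx2
              obtain ⟨y', hy', rfl⟩ := Finset.mem_map.1 hy2
              obtain ⟨z', hz', rfl⟩ := Finset.mem_map.1 hz2
              simp only [RelEmbedding.coe_toEmbedding, embγ.le_iff_le] at hxy hyz ⊢
              exact hU2 x' hx' y' hy' z' hz' hxy hyz
        have := card_le_ao hCU
        rw [Finset.card_union_of_disjoint hdisj, Finset.card_map, Finset.card_map,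
          hc1, hc2] at this
        exact this
      have haoβ1 : 1 ≤ ao {x : α // x ≤ m} := @one_le_ao _ _ _ ⟨⟨m, le_rfl⟩⟩
      have haoγ1 : 1 ≤ ao {x : α // ¬ x ≤ m} := @one_le_ao _ _ _ ⟨⟨y0, hy0⟩⟩
      have hhβ : heightP {x : α // x ≤ m} ≤ ao {x : α // x ≤ m} := height_le_ao
      have hhγ : heightP {x : α // ¬ x ≤ m} ≤ ao {x : α // ¬ x ≤ m} := height_le_ao
      have hhβα : heightP {x : α // x ≤ m} ≤ heightP α := height_le_embed embβ
      have hhγα : heightP {x : α // ¬ x ≤ m} ≤ heightP α := height_le_embed embγ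
      have hSBsum : SB (ao {x : α // x ≤ m}) + SB (ao {x : α // ¬ x ≤ m})
          + min (ao {x : α // x ≤ m}) (ao {x : α // ¬ x ≤ m}) ≤ SB (ao α) :=
        le_trans (SB_superadd _ _) (SB_mono haosum)
      have hminh : min (heightP {x : α // x ≤ m}) (heightP {x : α // ¬ x ≤ m})
          ≤ min (ao {x : α // x ≤ m}) (ao {x : α // ¬ x ≤ m}) := min_le_min hhβ hhγ
      have hmaxmin : heightP {x : α // x ≤ m} + heightP {x : α // ¬ x ≤ m} ≤
          heightP α + min (heightP {x : α // x ≤ m}) (heightP {x : α // ¬ x ≤ m}) := by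
        rcases le_total (heightP {x : α // x ≤ m}) (heightP {x : α // ¬ x ≤ m}) with h | h
        · rw [min_eq_left h]; omega
        · rw [min_eq_right h]; omega
      omega

theorem card_le_SB (α : Type) [Fintype α] [PartialOrder α] (hV : VFree α) :
    Fintype.card α ≤ SB (ao α) + heightP α :=
  card_le_SB_aux (Fintype.card α) α le_rfl hV

section SumLemmas

variable {A : Type} [Fintype A] [PartialOrder A]
variable {C : Type} [Fintype C] [PartialOrder C]
variable {B : Type} [Fintype B] [LinearOrder B]

/-- `inl` as an order embedding into the disjoint sum. -/
def inlSum : A ↪o (A ⊕ C) :=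
  ⟨⟨Sum.inl, Sum.inl_injective⟩, Sum.inl_le_inl_iff⟩

def inrSum : C ↪o (A ⊕ C) :=
  ⟨⟨Sum.inr, Sum.inr_injective⟩, Sum.inr_le_inr_iff⟩

/-- `inl` as an order embedding into the lex sum. -/
def inlLex : A ↪o (A ⊕ₗ B) :=
  ⟨⟨fun a => toLex (Sum.inl a), fun a b h => Sum.inl_injective (toLex.injective h)⟩,
    Sum.Lex.inl_le_inl_iff⟩

def inrLex : B ↪o (A ⊕ₗ B) :=
  ⟨⟨fun b => toLex (Sum.inr b), fun a b h => Sum.inr_injective (toLex.injective h)⟩,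
    Sum.Lex.inr_le_inr_iff⟩

lemma vfree_sum (hA : VFree A) (hC : VFree C) : VFree (A ⊕ C) := by
  rintro ⟨p1, p2, p3, h12, h13, hinc⟩
  rcases p1 with a1 | c1 <;> rcases p2 with a2 | c2 <;> rcases p3 with a3 | c3
  all_goals try exact absurd h12.le Sum.not_inl_le_inr
  all_goals try exact absurd h12.le Sum.not_inr_le_inl
  all_goals try exact absurd h13.le Sum.not_inl_le_inr
  all_goals try exact absurd h13.le Sum.not_inr_le_inl
  · exact hA ⟨a1, a2, a3, Sum.inl_lt_inl_iff.1 h12, Sum.inl_lt_inl_iff.1 h13, by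
      simpa [Sum.inl_le_inl_iff] using hinc⟩
  · exact hC ⟨c1, c2, c3, Sum.inr_lt_inr_iff.1 h12, Sum.inr_lt_inr_iff.1 h13, by
      simpa [Sum.inr_le_inr_iff] using hinc⟩

lemma ao_sum : ao (A ⊕ C) = ao A + ao C := by
  apply le_antisymm
  · obtain ⟨U, hU, hcard⟩ := ao_spec (α := A ⊕ C)
    have hL : IsChainUnion U.toLeft := by
      intro x hx y hy z hz hxy hyz
      rw [Finset.mem_toLeft] at hx hy hz
      have := hU _ hx _ hy _ hz (by simpa [Sum.inl_le_inl_iff] using hxy)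
        (by simpa [Sum.inl_le_inl_iff] using hyz)
      simpa [Sum.inl_le_inl_iff] using this
    have hR : IsChainUnion U.toRight := by
      intro x hx y hy z hz hxy hyz
      rw [Finset.mem_toRight] at hx hy hz
      have := hU _ hx _ hy _ hz (by simpa [Sum.inr_le_inr_iff] using hxy)
        (by simpa [Sum.inr_le_inr_iff] using hyz)
      simpa [Sum.inr_le_inr_iff] using this
    have h1 := card_le_ao hL
    have h2 := card_le_ao hR
    have h3 := Finset.card_toLeft_add_card_toRight (u := U)
    omega
  · obtain ⟨U1, hU1, hc1⟩ := ao_spec (α := A)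
    obtain ⟨U2, hU2, hc2⟩ := ao_spec (α := C)
    have hCU : IsChainUnion (U1.disjSum U2) := by
      intro x hx y hy z hz hxy hyz
      rw [Finset.mem_disjSum] at hx hy hz
      rcases hx with ⟨a, ha, rfl⟩ | ⟨a, ha, rfl⟩ <;>
        rcases hy with ⟨b, hb, rfl⟩ | ⟨b, hb, rfl⟩ <;>
        rcases hz with ⟨c, hc, rfl⟩ | ⟨c, hc, rfl⟩ <;>
        simp only [Sum.inl_le_inl_iff, Sum.inr_le_inr_iff, Sum.not_inl_le_inr,
          Sum.not_inr_le_inl, or_self, false_or, or_false] at hxy hyz ⊢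
      · exact hU1 _ ha _ hb _ hc hxy hyz
      all_goals first
        | exact hxy.elim
        | exact hyz.elim
        | exact hU2 _ ha _ hb _ hc hxy hyz
        | trivial
    have := card_le_ao hCU
    rwa [Finset.card_disjSum, hc1, hc2] at this
  
lemma height_sum : heightP (A ⊕ C) = max (heightP A) (heightP C) := by
  apply le_antisymm
  · obtain ⟨D, hD, hcard⟩ := height_spec (α := A ⊕ C)
    have hLchain : IsChain (· ≤ ·) (↑D.toLeft : Set A) := by
      intro x hx y hy hne
      simp only [Finset.mem_coe, Finset.mem_toLeft] at hx hy
      have := hD (by simpa using hx) (by simpa using hy)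
        (fun h => hne (Sum.inl_injective h))
      simpa [Sum.inl_le_inl_iff] using this
    have hRchain : IsChain (· ≤ ·) (↑D.toRight : Set C) := by
      intro x hx y hy hne
      simp only [Finset.mem_coe, Finset.mem_toRight] at hx hy
      have := hD (by simpa using hx) (by simpa using hy)
        (fun h => hne (Sum.inr_injective h))
      simpa [Sum.inr_le_inr_iff] using this
    have hempty : D.toLeft = ∅ ∨ D.toRight = ∅ := by
      by_contra h
      push_neg at h
      obtain ⟨a, ha⟩ := h.1
      obtain ⟨b, hb⟩ := h.2
      rw [Finset.mem_toLeft] at ha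
      rw [Finset.mem_toRight] at hb
      have := hD (by simpa using ha) (by simpa using hb) (by simp)
      simpa using this
    have h3 := Finset.card_toLeft_add_card_toRight (u := D)
    have h1 := card_le_height hLchain
    have h2 := card_le_height hRchain
    rcases hempty with h | h <;> rw [h] at h3 <;> simp at h3 <;> omega
  · exact max_le (height_le_embed (inlSum (C := C))) (height_le_embed inrSum)

lemma vfree_lex (hA : VFree A) : VFree (A ⊕ₗ B) := by
  rintro ⟨p1, p2, p3, h12, h13, hinc⟩
  rcases hp2 : ofLex p2 with a2 | b2
  · rcases hp3 : ofLex p3 with a3 | b3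
    · -- both inl; p1 must be inl
      have hp2' : p2 = toLex (Sum.inl a2) := by rw [← hp2]; rfl
      have hp3' : p3 = toLex (Sum.inl a3) := by rw [← hp3]; rfl
      rcases hp1 : ofLex p1 with a1 | b1
      · have hp1' : p1 = toLex (Sum.inl a1) := by rw [← hp1]; rfl
        subst hp1'; subst hp2'; subst hp3'
        refine hA ⟨a1, a2, a3, ?_, ?_, ?_⟩
        · exact lt_of_le_of_ne (Sum.Lex.inl_le_inl_iff.1 h12.le)
            (fun h => h12.ne (by rw [h]))
        · exact lt_of_le_of_ne (Sum.Lex.inl_le_inl_iff.1 h13.le)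
            (fun h => h13.ne (by rw [h]))
        · rintro (h | h)
          · exact hinc (Or.inl (Sum.Lex.inl_le_inl_iff.2 h))
          · exact hinc (Or.inr (Sum.Lex.inl_le_inl_iff.2 h))
      · have hp1' : p1 = toLex (Sum.inr b1) := by rw [← hp1]; rfl
        subst hp1'; subst hp2'
        exact Sum.Lex.not_inr_le_inl h12.le
    · have hp3' : p3 = toLex (Sum.inr b3) := by rw [← hp3]; rfl
      have hp2' : p2 = toLex (Sum.inl a2) := by rw [← hp2]; rfl
      subst hp2'; subst hp3'
      exact hinc (Or.inl (Sum.Lex.inl_le_inr _ _))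
  · rcases hp3 : ofLex p3 with a3 | b3
    · have hp2' : p2 = toLex (Sum.inr b2) := by rw [← hp2]; rfl
      have hp3' : p3 = toLex (Sum.inl a3) := by rw [← hp3]; rfl
      subst hp2'; subst hp3'
      exact hinc (Or.inr (Sum.Lex.inl_le_inr _ _))
    · have hp2' : p2 = toLex (Sum.inr b2) := by rw [← hp2]; rfl
      have hp3' : p3 = toLex (Sum.inr b3) := by rw [← hp3]; rfl
      subst hp2'; subst hp3'
      rcases le_total b2 b3 with h | h
      · exact hinc (Or.inl (Sum.Lex.inr_le_inr_iff.2 h))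
      · exact hinc (Or.inr (Sum.Lex.inr_le_inr_iff.2 h))

lemma height_lex : heightP (A ⊕ₗ B) = heightP A + Fintype.card B := by
  classical
  apply le_antisymm
  · obtain ⟨D, hD, hcard⟩ := height_spec (α := A ⊕ₗ B)
    set W : Finset (A ⊕ B) := D.map (ofLex : (A ⊕ₗ B) ≃ (A ⊕ B)).toEmbedding with hW
    have hmemW : ∀ x : A ⊕ B, x ∈ W ↔ toLex x ∈ D := by
      intro x
      rw [hW, Finset.mem_map_equiv]
      rfl
    have hLchain : IsChain (· ≤ ·) (↑W.toLeft : Set A) := by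
      intro x hx y hy hne
      simp only [Finset.mem_coe, Finset.mem_toLeft, hmemW] at hx hy
      have := hD (by simpa using hx) (by simpa using hy)
        (fun h => hne (Sum.inl_injective (toLex.injective h)))
      rcases this with h | h
      · exact Or.inl (Sum.Lex.inl_le_inl_iff.1 h)
      · exact Or.inr (Sum.Lex.inl_le_inl_iff.1 h)
    have h1 := card_le_height hLchain
    have h2 : W.toRight.card ≤ Fintype.card B := Finset.card_le_univ _
    have h3 := Finset.card_toLeft_add_card_toRight (u := W)
    have h4 : W.card = D.card := Finset.card_map _
    omega
  · obtain ⟨CC, hCC, hcard⟩ := height_spec (α := A)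
    set D : Finset (A ⊕ₗ B) :=
      (CC.map (inlLex (B := B)).toEmbedding) ∪ (Finset.univ.map (inrLex (A := A)).toEmbedding)
      with hD
    have hdisj : Disjoint (CC.map (inlLex (B := B)).toEmbedding)
        (Finset.univ.map (inrLex (A := A)).toEmbedding) := by
      rw [Finset.disjoint_left]
      rintro x hx1 hx2
      obtain ⟨a, -, rfl⟩ := Finset.mem_map.1 hx1
      obtain ⟨b, -, hb⟩ := Finset.mem_map.1 hx2
      exact Sum.inl_ne_inr (toLex.injective hb).symm
    have hchain : IsChain (· ≤ ·) (↑D : Set (A ⊕ₗ B)) := by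
      intro x hx y hy hne
      simp only [hD, Finset.coe_union, Set.mem_union, Finset.mem_coe] at hx hy
      rcases hx with hx | hx <;> rcases hy with hy | hy
      · obtain ⟨a, ha, rfl⟩ := Finset.mem_map.1 hx
        obtain ⟨a', ha', rfl⟩ := Finset.mem_map.1 hy
        have hne' : a ≠ a' := fun h => hne (by rw [h])
        rcases hCC (by simpa using ha) (by simpa using ha') hne' with h | h
        · exact Or.inl ((inlLex (B := B)).monotone h)
        · exact Or.inr ((inlLex (B := B)).monotone h)
      · obtain ⟨a, -, rfl⟩ := Finset.mem_map.1 hx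
        obtain ⟨b, -, rfl⟩ := Finset.mem_map.1 hy
        exact Or.inl (Sum.Lex.inl_le_inr _ _)
      · obtain ⟨b, -, rfl⟩ := Finset.mem_map.1 hx
        obtain ⟨a, -, rfl⟩ := Finset.mem_map.1 hy
        exact Or.inr (Sum.Lex.inl_le_inr _ _)
      · obtain ⟨b, -, rfl⟩ := Finset.mem_map.1 hx
        obtain ⟨b', -, rfl⟩ := Finset.mem_map.1 hy
        rcases le_total b b' with h | h
        · exact Or.inl ((inrLex (A := A)).monotone h)
        · exact Or.inr ((inrLex (A := A)).monotone h)
    have := card_le_height hchain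
    rw [Finset.card_union_of_disjoint hdisj, Finset.card_map, Finset.card_map,
      Finset.card_univ, hcard] at this
    exact this

lemma ao_lex : ao (A ⊕ₗ B) = max (ao A) (heightP A + Fintype.card B) := by
  classical
  apply le_antisymm
  · obtain ⟨U, hU, hcard⟩ := ao_spec (α := A ⊕ₗ B)
    by_cases hr : ∃ b : B, toLex (Sum.inr b) ∈ U
    · obtain ⟨b, hb⟩ := hr
      have hcomp : ∀ x : A ⊕ₗ B,
          (x ≤ toLex (Sum.inr b) ∨ toLex (Sum.inr b) ≤ x) := by
        intro x
        rcases hx : ofLex x with a | b'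
        · have hx' : x = toLex (Sum.inl a) := by rw [← hx]; rfl
          rw [hx']
          exact Or.inl (Sum.Lex.inl_le_inr _ _)
        · have hx' : x = toLex (Sum.inr b') := by rw [← hx]; rfl
          rw [hx']
          rcases le_total b' b with h | h
          · exact Or.inl (Sum.Lex.inr_le_inr_iff.2 h)
          · exact Or.inr (Sum.Lex.inr_le_inr_iff.2 h)
      have hchain : IsChain (· ≤ ·) (↑U : Set (A ⊕ₗ B)) := by
        intro x hx y hy hne
        exact hU x (by simpa using hx) _ hb y (by simpa using hy) (hcomp x)
          ((hcomp y).symm.imp id id |>.symm |> fun h => Or.symm h)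
      have := card_le_height hchain
      rw [hcard] at this
      rw [height_lex] at this
      exact le_max_of_le_right this
    · push_neg at hr
      set W : Finset (A ⊕ B) := U.map (ofLex : (A ⊕ₗ B) ≃ (A ⊕ B)).toEmbedding with hW
      have hmemW : ∀ x : A ⊕ B, x ∈ W ↔ toLex x ∈ U := by
        intro x
        rw [hW, Finset.mem_map_equiv]
        rfl
      have hRempty : W.toRight = ∅ := by
        rw [Finset.eq_empty_iff_forall_notMem]
        intro b hb
        rw [Finset.mem_toRight, hmemW] at hb
        exact hr b hb
      have hLCU : IsChainUnion W.toLeft := by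
        intro x hx y hy z hz hxy hyz
        simp only [Finset.mem_toLeft, hmemW] at hx hy hz
        have := hU _ hx _ hy _ hz
          (hxy.imp Sum.Lex.inl_le_inl_iff.2 Sum.Lex.inl_le_inl_iff.2)
          (hyz.imp Sum.Lex.inl_le_inl_iff.2 Sum.Lex.inl_le_inl_iff.2)
        exact this.imp Sum.Lex.inl_le_inl_iff.1 Sum.Lex.inl_le_inl_iff.1
      have h1 := card_le_ao hLCU
      have h3 := Finset.card_toLeft_add_card_toRight (u := W)
      have h4 : W.card = U.card := Finset.card_map _
      rw [hRempty] at h3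
      simp only [Finset.card_empty] at h3
      have : U.card ≤ ao A := by omega
      rw [hcard] at this
      exact le_max_of_le_left this
  · apply max_le
    · exact ao_le_embed (inlLex (B := B))
    · rw [← height_lex (A := A) (B := B)]
      exact height_le_ao

end SumLemmas

/-! ### The extremal construction -/

def Tk : ℕ → Type
  | 0 => Fin 1
  | (k+1) => (Tk k ⊕ Tk k) ⊕ₗ Fin (2^k)

instance TkPO : ∀ k, PartialOrder (Tk k)
  | 0 => inferInstanceAs (PartialOrder (Fin 1))
  | (k+1) =>
    letI := TkPO k
    inferInstanceAs (PartialOrder ((Tk k ⊕ Tk k) ⊕ₗ Fin (2^k)))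

instance TkFT : ∀ k, Fintype (Tk k)
  | 0 => inferInstanceAs (Fintype (Fin 1))
  | (k+1) =>
    letI := TkFT k
    inferInstanceAs (Fintype ((Tk k ⊕ Tk k) ⊕ₗ Fin (2^k)))

lemma card_lex (A : Type) [Fintype A] [PartialOrder A] (B : Type) [Fintype B] [LinearOrder B] :
    Fintype.card (A ⊕ₗ B) = Fintype.card A + Fintype.card B := by
  rw [← Fintype.card_sum]
  exact Fintype.card_congr (toLex : (A ⊕ B) ≃ (A ⊕ₗ B)).symm

lemma Tk_facts : ∀ k, VFree (Tk k) ∧ ao (Tk k) = 2^k ∧ heightP (Tk k) = 2^k ∧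
    Fintype.card (Tk k) = 2^k + SB (2^k) := by
  intro k
  induction k with
  | zero =>
    have hcard : Fintype.card (Tk 0) = 1 := by
      exact (Fintype.card_fin 1 : Fintype.card (Fin 1) = 1)
    have hne : Nonempty (Tk 0) := Fintype.card_pos_iff.1 (by omega)
    refine ⟨?_, ?_, ?_, ?_⟩
    · rintro ⟨p1, p2, p3, h12, -, -⟩
      have : p1 = p2 := Subsingleton.elim (α := Fin 1) p1 p2
      rw [this] at h12
      exact lt_irrefl _ h12
    · have h1 := ao_le_card (α := Tk 0)
      have h2 := @one_le_ao (Tk 0) _ _ hne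
      rw [hcard] at h1
      omega
    · have h1 : heightP (Tk 0) ≤ Fintype.card (Tk 0) := by
        obtain ⟨C, -, hc⟩ := height_spec (α := Tk 0)
        rw [← hc]
        exact Finset.card_le_univ C
      have h2 := @one_le_height (Tk 0) _ _ hne
      rw [hcard] at h1
      have : (2:ℕ)^0 = 1 := by norm_num
      omega
    · rw [hcard]
      have : SB (2^0) = 0 := by norm_num [SB_one]
      rw [this]
      norm_num
  | succ k ih =>
    obtain ⟨hVk, haok, hhk, hck⟩ := ih
    have hVs : VFree (Tk k ⊕ Tk k) := vfree_sum hVk hVk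
    have haos : ao (Tk k ⊕ Tk k) = 2^k + 2^k := by rw [ao_sum, haok]
    have hhs : heightP (Tk k ⊕ Tk k) = 2^k := by rw [height_sum, hhk, max_self]
    have hcs : Fintype.card (Tk k ⊕ Tk k) = 2*(2^k + SB (2^k)) := by
      rw [Fintype.card_sum, hck]; ring
    have hpow : (2:ℕ)^(k+1) = 2^k + 2^k := by ring
    have hSB : SB (2^(k+1)) = SB (2^k) + 2^k + SB (2^k) := by
      rw [hpow]
      exact SB_shift k (2^k) le_rfl
    refine ⟨?_, ?_, ?_, ?_⟩
    · exact vfree_lex (B := Fin (2^k)) hVs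
    · show ao ((Tk k ⊕ Tk k) ⊕ₗ Fin (2^k)) = 2^(k+1)
      rw [ao_lex, haos, hhs, Fintype.card_fin]
      omega
    · show heightP ((Tk k ⊕ Tk k) ⊕ₗ Fin (2^k)) = 2^(k+1)
      rw [height_lex, hhs, Fintype.card_fin]
      omega
    · show Fintype.card ((Tk k ⊕ Tk k) ⊕ₗ Fin (2^k)) = 2^(k+1) + SB (2^(k+1))
      rw [card_lex, hcs, Fintype.card_fin]
      omega

end LamAux

namespace LamAux

lemma lam_mem_le {a h n : ℕ}
    (hn : n ∈ {n | ∃ P : PartialOrder (Fin n), @VFree (Fin n) P ∧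
      @ao (Fin n) (Fin.fintype n) P = a ∧ @heightP (Fin n) (Fin.fintype n) P ≤ h}) :
    n ≤ SB a + h := by
  obtain ⟨P, hV, hao, hht⟩ := hn
  have := @card_le_SB (Fin n) (Fin.fintype n) P hV
  rw [Fintype.card_fin, hao] at this
  omega

lemma Lam_le (a h : ℕ) : Lam a h ≤ SB a + h :=
  csSup_le' (fun _ hn => lam_mem_le hn)

/-- transfer a finite poset structure to an order-less type of the same cardinality -/
lemma transfer (γ : Type) [Fintype γ] [PartialOrder γ] (δ : Type) (Fδ : Fintype δ)
    (e : γ ≃ δ) (hV : VFree γ) :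
    ∃ P : PartialOrder δ, @VFree δ P ∧ @ao δ Fδ P = ao γ ∧ @heightP δ Fδ P = heightP γ := by
  letI P : PartialOrder δ := PartialOrder.lift e.symm e.symm.injective
  have φ : δ ≃o γ := { toEquiv := e.symm, map_rel_iff' := Iff.rfl }
  refine ⟨P, ?_, ao_congr φ, height_congr φ⟩
  exact vfree_embed φ.toOrderEmbedding hV

lemma Lambda_lower (k : ℕ) : 2^k + SB (2^k) ≤ Lambda (2^k) := by
  obtain ⟨hV, hao, hht, hcard⟩ := Tk_facts k
  set N := 2^k + SB (2^k) with hN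
  obtain ⟨P, hVN, haoN, hhtN⟩ := transfer (Tk k) (Fin N) (Fin.fintype N)
    (Fintype.equivFinOfCardEq hcard) hV
  have hmem : N ∈ {n | ∃ P : PartialOrder (Fin n), @VFree (Fin n) P ∧
      @ao (Fin n) (Fin.fintype n) P = 2^k ∧ @heightP (Fin n) (Fin.fintype n) P ≤ 2^k} :=
    ⟨P, hVN, by rw [haoN, hao], by rw [hhtN, hht]⟩
  have hbdd : BddAbove {n | ∃ P : PartialOrder (Fin n), @VFree (Fin n) P ∧
      @ao (Fin n) (Fin.fintype n) P = 2^k ∧ @heightP (Fin n) (Fin.fintype n) P ≤ 2^k} :=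
    ⟨SB (2^k) + 2^k, fun n hn => lam_mem_le hn⟩
  exact le_csSup hbdd hmem

end LamAux

/-- for `a = 2^k` with `k ≥ 1` and `a/2 < f < a`,
`Λ(f) + Λ(a−f) + (a−f) < Λ(a)`. -/
theorem Lambda_strict_below_pow (k f : ℕ) (hk : 1 ≤ k)
    (hf1 : 2 ^ k < 2 * f) (hf2 : f < 2 ^ k) :
    Lambda f + Lambda (2 ^ k - f) + (2 ^ k - f) < Lambda (2 ^ k) := by
  have h1 : Lambda f ≤ LamAux.SB f + f := LamAux.Lam_le f f
  have h2 : Lambda (2^k - f) ≤ LamAux.SB (2^k - f) + (2^k - f) := LamAux.Lam_le _ _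
  have h3 := LamAux.Lambda_lower k
  have h4 := LamAux.arith_main k f hk hf1 hf2
  omega
end

section
/- Let P_n denote the family of all posets on n elements. Then min over P in P_n of ao(P) equals ⌈√n⌉. In particular, every poset P on n elements satisfies ao(P) ≥ ⌈√n⌉, and there exists a poset on n elements (a complete multipartite ordering) achieving ao(P) = ⌈√n⌉. -/
set_option linter.unusedSectionVars false

section Aux
variable {α : Type*} [Fintype α] [PartialOrder α]

lemma aoSet_bddAbove :
    BddAbove {m | ∃ U : Finset α, IsChainUnion U ∧ U.card = m} :=
  ⟨Fintype.card α, by rintro m ⟨U, -, rfl⟩; exact Finset.card_le_univ U⟩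

lemma le_ao_of_chainUnion {U : Finset α} (h : IsChainUnion U) : U.card ≤ ao α :=
  le_csSup aoSet_bddAbove ⟨U, h, rfl⟩

lemma antichain_isChainUnion {A : Finset α} (h : IsAntichain (· ≤ ·) (↑A : Set α)) :
    IsChainUnion A := by
  intro x hx y hy z hz hxy hyz
  have hxy' : x = y := by
    by_contra hne
    rcases hxy with h1 | h1
    · exact h (Finset.mem_coe.2 hx) (Finset.mem_coe.2 hy) hne h1
    · exact h (Finset.mem_coe.2 hy) (Finset.mem_coe.2 hx) (Ne.symm hne) h1
  subst hxy'; exact hyz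

noncomputable def chainTo (x : α) : ℕ :=
  sSup {m | ∃ C : Finset α,
    IsChain (· ≤ ·) (↑C : Set α) ∧ (∀ y ∈ C, y ≤ x) ∧ x ∈ C ∧ C.card = m}

lemma chainTo_mem (x : α) : ∃ C : Finset α,
    IsChain (· ≤ ·) (↑C : Set α) ∧ (∀ y ∈ C, y ≤ x) ∧ x ∈ C ∧ C.card = chainTo x := by
  have h1 : (1 : ℕ) ∈ {m | ∃ C : Finset α,
      IsChain (· ≤ ·) (↑C : Set α) ∧ (∀ y ∈ C, y ≤ x) ∧ x ∈ C ∧ C.card = m} := by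
    refine ⟨{x}, by simp [Set.subsingleton_singleton.isChain], ?_, by simp, by simp⟩
    intro y hy; simp at hy; subst hy; exact le_rfl
  have hb : BddAbove {m | ∃ C : Finset α,
      IsChain (· ≤ ·) (↑C : Set α) ∧ (∀ y ∈ C, y ≤ x) ∧ x ∈ C ∧ C.card = m} :=
    ⟨Fintype.card α, by rintro m ⟨C, -, -, -, rfl⟩; exact Finset.card_le_univ C⟩
  exact Nat.sSup_mem ⟨1, h1⟩ hb

lemma one_le_chainTo (x : α) : 1 ≤ chainTo x := by
  have h1 : (1 : ℕ) ∈ {m | ∃ C : Finset α,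
      IsChain (· ≤ ·) (↑C : Set α) ∧ (∀ y ∈ C, y ≤ x) ∧ x ∈ C ∧ C.card = m} := by
    refine ⟨{x}, by simp [Set.subsingleton_singleton.isChain], ?_, by simp, by simp⟩
    intro y hy; simp at hy; subst hy; exact le_rfl
  exact le_csSup ⟨Fintype.card α, by rintro m ⟨C, -, -, -, rfl⟩; exact Finset.card_le_univ C⟩ h1

lemma chainTo_le_ao (x : α) : chainTo x ≤ ao α := by
  refine csSup_le ⟨1, by
    refine ⟨{x}, by simp [Set.subsingleton_singleton.isChain], ?_, by simp, by simp⟩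
    intro y hy; simp at hy; subst hy; exact le_rfl⟩ ?_
  rintro m ⟨C, hC, -, -, rfl⟩
  exact le_ao_of_chainUnion (chain_isChainUnion hC)

lemma chainTo_lt_of_lt {x y : α} (hxy : x < y) : chainTo x < chainTo y := by
  classical
  obtain ⟨C, hC, hle, hxC, hcard⟩ := chainTo_mem x
  have hyC : y ∉ C := fun hy => absurd (hle y hy) (not_le_of_gt hxy)
  have hchain : IsChain (· ≤ ·) (↑(insert y C) : Set α) := by
    rw [Finset.coe_insert]
    exact hC.insert (fun b hb _ => Or.inr ((hle b hb).trans hxy.le))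
  have hmem : chainTo x + 1 ∈ {m | ∃ C : Finset α,
      IsChain (· ≤ ·) (↑C : Set α) ∧ (∀ z ∈ C, z ≤ y) ∧ y ∈ C ∧ C.card = m} := by
    refine ⟨insert y C, hchain, ?_, Finset.mem_insert_self y C, ?_⟩
    · intro z hz
      rcases Finset.mem_insert.1 hz with rfl | hz
      · exact le_rfl
      · exact (hle z hz).trans hxy.le
    · rw [Finset.card_insert_of_notMem hyC, hcard]
  have := le_csSup (s := {m | ∃ C : Finset α,
      IsChain (· ≤ ·) (↑C : Set α) ∧ (∀ z ∈ C, z ≤ y) ∧ y ∈ C ∧ C.card = m})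
    ⟨Fintype.card α, by rintro m ⟨C, -, -, -, rfl⟩; exact Finset.card_le_univ C⟩ hmem
  exact lt_of_lt_of_le (Nat.lt_succ_self _) this

lemma card_le_ao_mul_ao : Fintype.card α ≤ ao α * ao α := by
  classical
  have hsub : (Finset.univ : Finset α) ⊆
      (Finset.Icc 1 (ao α)).biUnion (fun i => Finset.univ.filter (fun x => chainTo x = i)) := by
    intro x _
    refine Finset.mem_biUnion.2 ⟨chainTo x, ?_, by simp⟩
    exact Finset.mem_Icc.2 ⟨one_le_chainTo x, chainTo_le_ao x⟩
  have hfib : ∀ i, (Finset.univ.filter (fun x : α => chainTo x = i)).card ≤ ao α := by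
    intro i
    refine le_ao_of_chainUnion (antichain_isChainUnion ?_)
    intro x hx y hy hne hle
    simp only [Finset.coe_filter, Set.mem_setOf_eq] at hx hy
    have : chainTo x < chainTo y := chainTo_lt_of_lt (lt_of_le_of_ne hle hne)
    omega
  calc Fintype.card α = (Finset.univ : Finset α).card := Finset.card_univ.symm
    _ ≤ _ := Finset.card_le_card hsub
    _ ≤ ∑ i ∈ Finset.Icc 1 (ao α),
        (Finset.univ.filter (fun x : α => chainTo x = i)).card := Finset.card_biUnion_le
    _ ≤ ∑ _i ∈ Finset.Icc 1 (ao α), ao α := Finset.sum_le_sum (fun i _ => hfib i)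
    _ = (Finset.Icc 1 (ao α)).card * ao α := by rw [Finset.sum_const, smul_eq_mul]
    _ = ao α * ao α := by rw [Nat.card_Icc]; simp

end Aux


def blockOrder (n k : ℕ) : PartialOrder (Fin n) where
  le x y := x = y ∨ x.val / k < y.val / k
  lt x y := (x = y ∨ x.val / k < y.val / k) ∧ ¬(y = x ∨ y.val / k < x.val / k)
  lt_iff_le_not_ge := fun _ _ => Iff.rfl
  le_refl x := Or.inl rfl
  le_trans := by
    rintro x y z (rfl | h1) (rfl | h2)
    · exact Or.inl rfl
    · exact Or.inr h2
    · exact Or.inr h1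
    · exact Or.inr (h1.trans h2)
  le_antisymm := by
    rintro x y (rfl | h1) (h2 | h2)
    · rfl
    · rfl
    · exact h2.symm
    · omega

lemma blockOrder_ao (n k : ℕ) (hkn : k ≤ n) (hnk : n ≤ k * k) :
    @ao (Fin n) (Fin.fintype n) (blockOrder n k) = k := by
  classical
  letI P := blockOrder n k
  have hle : ∀ x y : Fin n, (P.le x y) ↔ (x = y ∨ x.val / k < y.val / k) := fun _ _ => Iff.rfl
  -- upper bound: every chain union has card ≤ k
  have upper : ∀ U : Finset (Fin n), @IsChainUnion (Fin n) P U → U.card ≤ k := by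
    intro U hU
    by_cases hsame : ∀ x ∈ U, ∀ y ∈ U, x.val / k = y.val / k
    · -- all in one block: residues mod k are distinct and < k
      have : U.card ≤ (Finset.range k).card := by
        apply Finset.card_le_card_of_injOn (fun x => x.val % k)
        · intro x hx
          rcases Nat.eq_zero_or_pos k with rfl | hk
          · exact absurd x.isLt (by omega)
          · exact Finset.mem_range.2 (Nat.mod_lt _ hk)
        · intro x hx y hy hxy
          simp only at hxy
          have hd := hsame x hx y hy
          have : x.val = y.val := by
            rw [← Nat.div_add_mod x.val k, ← Nat.div_add_mod y.val k, hd, hxy]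
          exact Fin.ext this
      simpa using this
    · -- two different blocks present: block map injective on U
      push_neg at hsame
      obtain ⟨a, ha, b, hb, hab⟩ := hsame
      have hk : 0 < k := by
        rcases Nat.eq_zero_or_pos k with rfl | hk
        · omega
        · exact hk
      have hinj : Set.InjOn (fun x : Fin n => x.val / k) U := by
        intro z hz w hw hzw
        replace hzw : z.val / k = w.val / k := hzw
        by_contra hne
        -- pick u among a,b with u's block different from z's block
        have key : ∀ u ∈ U, u.val / k ≠ z.val / k → False := by
          intro u hu hune
          have h1 : P.le z u ∨ P.le u z := by
            rcases Nat.lt_or_ge (z.val / k) (u.val / k) with h | h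
            · exact Or.inl (Or.inr h)
            · exact Or.inr (Or.inr (by omega))
          have h2 : P.le u w ∨ P.le w u := by
            rcases Nat.lt_or_ge (u.val / k) (w.val / k) with h | h
            · exact Or.inl (Or.inr h)
            · exact Or.inr (Or.inr (by omega))
          have := hU z hz u hu w hw h1 h2
          rcases this with h | h <;> rcases h with h | h
          · exact hne h
          · omega
          · exact hne h.symm
          · omega
        by_cases haz : a.val / k = z.val / k
        · exact key b hb (by omega)
        · exact key a ha haz
      have : U.card ≤ (Finset.range k).card := by
        apply Finset.card_le_card_of_injOn (fun x => x.val / k)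
        · intro x hx
          exact Finset.mem_range.2 (Nat.div_lt_of_lt_mul (lt_of_lt_of_le x.isLt hnk))
        · exact hinj
      simpa using this
  -- lower bound: the first block is a chain union of card k
  have hmemU : ∀ x : Fin n, x ∈ (Finset.range k).attachFin
      (fun m hm => lt_of_lt_of_le (Finset.mem_range.1 hm) hkn) ↔ x.val < k := by
    intro x; rw [Finset.mem_attachFin]; exact Finset.mem_range
  set U0 : Finset (Fin n) := (Finset.range k).attachFin
      (fun m hm => lt_of_lt_of_le (Finset.mem_range.1 hm) hkn) with hU0
  have hcard : U0.card = k := by rw [hU0, Finset.card_attachFin, Finset.card_range]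
  have hCU : @IsChainUnion (Fin n) P U0 := by
    intro x hx y hy z hz hxy hyz
    have hx' := (hmemU x).1 hx
    have hy' := (hmemU y).1 hy
    have hz' := (hmemU z).1 hz
    have ex : ∀ u v : Fin n, u.val < k → v.val < k → P.le u v → u = v := by
      rintro u v hu hv (h | h)
      · exact h
      · rw [Nat.div_eq_of_lt hu, Nat.div_eq_of_lt hv] at h; omega
    have hxy' : x = y := by rcases hxy with h | h
                            exacts [ex x y hx' hy' h, (ex y x hy' hx' h).symm]
    subst hxy'; exact hyz
  -- conclude
  apply le_antisymm
  · refine csSup_le ⟨k, U0, hCU, hcard⟩ ?_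
    rintro m ⟨U, hU, rfl⟩
    exact upper U hU
  · exact le_csSup ⟨Fintype.card (Fin n), by rintro m ⟨U, -, rfl⟩; exact Finset.card_le_univ U⟩
      ⟨U0, hCU, hcard⟩


/-- the minimum of `ao` over all posets on `n` elements is `⌈√n⌉`:
every poset on `n` elements has `ao ≥ ⌈√n⌉` and some poset attains it. -/
theorem ao_all_posets (n : ℕ) :
    sInf {m | ∃ P : PartialOrder (Fin n), @ao (Fin n) (Fin.fintype n) P = m}
        = ⌈Real.sqrt n⌉₊ ∧
      (∀ P : PartialOrder (Fin n), ⌈Real.sqrt n⌉₊ ≤ @ao (Fin n) (Fin.fintype n) P) ∧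
      (∃ P : PartialOrder (Fin n), @ao (Fin n) (Fin.fintype n) P = ⌈Real.sqrt n⌉₊) := by
  classical
  set k := ⌈Real.sqrt (n : ℝ)⌉₊ with hk
  have hnk : n ≤ k * k := by
    have h1 : Real.sqrt n ≤ (k : ℝ) := Nat.le_ceil _
    have h2 : (n : ℝ) ≤ (k : ℝ) * (k : ℝ) := by
      nlinarith [Real.sq_sqrt (by positivity : (0:ℝ) ≤ (n:ℝ)), Real.sqrt_nonneg (n:ℝ)]
    exact_mod_cast h2
  have hkn : k ≤ n := by
    rcases Nat.eq_zero_or_pos n with rfl | hn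
    · simp [hk]
    · refine Nat.ceil_le.2 ((Real.sqrt_le_left (by positivity)).2 ?_)
      exact_mod_cast Nat.le_self_pow two_ne_zero n
  have lower : ∀ P : PartialOrder (Fin n), k ≤ @ao (Fin n) (Fin.fintype n) P := by
    intro P
    have hcard : n ≤ @ao (Fin n) (Fin.fintype n) P * @ao (Fin n) (Fin.fintype n) P := by
      have := @card_le_ao_mul_ao (Fin n) (Fin.fintype n) P
      rwa [Fintype.card_fin] at this
    set a := @ao (Fin n) (Fin.fintype n) P
    refine Nat.ceil_le.2 ?_
    calc Real.sqrt n ≤ Real.sqrt ((a : ℝ) * (a : ℝ)) :=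
          Real.sqrt_le_sqrt (by exact_mod_cast hcard)
      _ = a := Real.sqrt_mul_self (Nat.cast_nonneg a)
  have hexists : @ao (Fin n) (Fin.fintype n) (blockOrder n k) = k := blockOrder_ao n k hkn hnk
  refine ⟨?_, lower, ⟨blockOrder n k, hexists⟩⟩
  apply le_antisymm
  · exact Nat.sInf_le ⟨blockOrder n k, hexists⟩
  · refine le_csInf ⟨k, blockOrder n k, hexists⟩ ?_
    rintro m ⟨P, rfl⟩
    exact lower P
end
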